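/- arXiv:1502.02643 — 4 statements merged into one kernel-verified Lean document; each statement's English description precedes it below -/
import Mathlib

section
/- Let y ∈ 𝒴, let y* be an optimal solution of (Prox-DSM) closest to y, and let g* be the optimal value of (Prox-DSM). Then ⟨∇g(y), y* − y⟩ ≤ ( g* − g(y) ) − (1/(n²r)) ‖y − y*‖². -/
open scoped RealInnerProductSpace Pointwise

noncomputable section

/-- A set function on the ground set `V = {1,…,n}` (modeled as `Fin n`) is submodular if
`F(A ∩ B) + F(A ∪ B) ≤ F(A) + F(B)` for all `A, B ⊆ V`. -/
def Submodular {n : ℕ} (F : Finset (Fin n) → ℝ) : Prop :=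
  ∀ A B : Finset (Fin n), F (A ∩ B) + F (A ∪ B) ≤ F A + F B

/-- The base polytope `B(F) = {w ∈ ℝⁿ | ∀ A ⊆ V, w(A) ≤ F(A), and w(V) = F(V)}`. -/
def basePolytope (n : ℕ) (F : Finset (Fin n) → ℝ) : Set (EuclideanSpace ℝ (Fin n)) :=
  {w | (∀ A : Finset (Fin n), ∑ i ∈ A, w i ≤ F A) ∧ (∑ i, w i = F Finset.univ)}

/-- `ℝ^{nr}` with the Euclidean norm, written in `r` blocks of `n` coordinates. -/
abbrev Vec (n r : ℕ) := PiLp 2 (fun _ : Fin r => EuclideanSpace ℝ (Fin n))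

/-- The feasible set `𝒴 = ∏ᵢ B(Fᵢ)` of (Prox-DSM). -/
def feas (n r : ℕ) (F : Fin r → Finset (Fin n) → ℝ) : Set (Vec n r) :=
  {y | ∀ i, y i ∈ basePolytope n (F i)}

/-- The objective `g(y) = ‖∑ᵢ y⁽ⁱ⁾‖²` of (Prox-DSM). -/
def g (n r : ℕ) (y : Vec n r) : ℝ := ‖∑ i, y i‖ ^ 2

/-- The `i`-th block of the gradient of `g`: `∇ᵢ g(y) = 2 ∑ⱼ y⁽ʲ⁾` (the same for every `i`). -/
def gradBlock (n r : ℕ) (y : Vec n r) : EuclideanSpace ℝ (Fin n) := (2 : ℝ) • ∑ j, y j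

/-- The full gradient `∇g(y) ∈ ℝ^{nr}`, whose every block equals `2 ∑ⱼ y⁽ʲ⁾`. -/
def gradg (n r : ℕ) (y : Vec n r) : Vec n r := WithLp.toLp 2 (fun _ => gradBlock n r y)

/-- `y` is an optimal solution of (Prox-DSM). -/
def IsOptimal (n r : ℕ) (F : Fin r → Finset (Fin n) → ℝ) (y : Vec n r) : Prop :=
  y ∈ feas n r F ∧ ∀ z ∈ feas n r F, g n r y ≤ g n r z

/-- The linear map `S = (1/√r)[Iₙ Iₙ ⋯ Iₙ]`, i.e. `S y = (1/√r) ∑ᵢ y⁽ⁱ⁾`. -/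
def Smap (n r : ℕ) (y : Vec n r) : EuclideanSpace ℝ (Fin n) := (Real.sqrt r)⁻¹ • ∑ i, y i

/-- Distance between two sets: `d(K₁, K₂) = inf{‖k₁ - k₂‖ : k₁ ∈ K₁, k₂ ∈ K₂}`. -/
def setDist {E : Type*} [PseudoMetricSpace E] (A B : Set E) : ℝ :=
  sInf ((fun p : E × E => dist p.1 p.2) '' (A ×ˢ B))

namespace S7

open Finset

variable {n r : ℕ}

/-- sum of `w` over a subset -/
def sA (w : Fin n → ℝ) (A : Finset (Fin n)) : ℝ := ∑ u ∈ A, w u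

/-- membership in base polytope, plain version -/
def InB (F : Finset (Fin n) → ℝ) (w : Fin n → ℝ) : Prop :=
  (∀ A, sA w A ≤ F A) ∧ sA w Finset.univ = F Finset.univ

def PFeas (F : Fin r → Finset (Fin n) → ℝ) (w : Fin r → Fin n → ℝ) : Prop :=
  ∀ i, InB (F i) (w i)

def tot (w : Fin r → Fin n → ℝ) (u : Fin n) : ℝ := ∑ i, w i u

lemma tight_inter_union {F : Finset (Fin n) → ℝ} {w : Fin n → ℝ} (hF : Submodular F)
    (hw : ∀ A, sA w A ≤ F A) {A B : Finset (Fin n)}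
    (hA : sA w A = F A) (hB : sA w B = F B) :
    sA w (A ∩ B) = F (A ∩ B) ∧ sA w (A ∪ B) = F (A ∪ B) := by
  classical
  have hm : sA w (A ∪ B) + sA w (A ∩ B) = sA w A + sA w B := Finset.sum_union_inter
  have h1 := hw (A ∩ B); have h2 := hw (A ∪ B); have h3 := hF A B
  constructor <;> linarith

lemma tight_inf {F : Finset (Fin n) → ℝ} {w : Fin n → ℝ} (hF : Submodular F)
    (hw : ∀ A, sA w A ≤ F A) (htop : sA w Finset.univ = F Finset.univ)
    (s : Finset (Fin n)) (T : Fin n → Finset (Fin n)) (hT : ∀ u ∈ s, sA w (T u) = F (T u)) :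
    sA w (s.inf T) = F (s.inf T) := by
  classical
  induction s using Finset.induction_on with
  | empty => simpa [Finset.inf_empty, Finset.top_eq_univ] using htop
  | insert _ _ ha ih =>
    rename_i a s
    rw [Finset.inf_insert, Finset.inf_eq_inter]
    exact (tight_inter_union hF hw (hT _ (Finset.mem_insert_self _ _))
      (ih fun u hu => hT u (Finset.mem_insert_of_mem hu))).1

lemma tight_sup {F : Finset (Fin n) → ℝ} {w : Fin n → ℝ} (hF : Submodular F)
    (hw : ∀ A, sA w A ≤ F A) (hbot : sA w ∅ = F ∅)
    (s : Finset (Fin n)) (T : Fin n → Finset (Fin n)) (hT : ∀ u ∈ s, sA w (T u) = F (T u)) :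
    sA w (s.sup T) = F (s.sup T) := by
  classical
  induction s using Finset.induction_on with
  | empty => simpa [Finset.sup_empty, Finset.bot_eq_empty] using hbot
  | insert _ _ ha ih =>
    rename_i a s
    rw [Finset.sup_insert, Finset.sup_eq_union]
    exact (tight_inter_union hF hw (hT _ (Finset.mem_insert_self _ _))
      (ih fun u hu => hT u (Finset.mem_insert_of_mem hu))).2



/-- The exchange arc relation (relative to a fixed decomposition `w`):
mass can be moved from `u` to `v` in some block. -/
def Arc (F : Fin r → Finset (Fin n) → ℝ) (w : Fin r → Fin n → ℝ) (u v : Fin n) : Prop :=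
  ∃ i, ∀ A, v ∈ A → u ∉ A → sA (w i) A < F i A

/-- From any strict-surplus element, a strict-deficit element is reachable via arcs. -/
lemma reach_deficit {F : Fin r → Finset (Fin n) → ℝ}
    (hsub : ∀ i, Submodular (F i)) (hnorm : ∀ i, F i ∅ = 0)
    {w x : Fin r → Fin n → ℝ} (hw : PFeas F w) (hx : PFeas F x)
    {u0 : Fin n} (hu0 : tot x u0 < tot w u0) :
    ∃ v, Relation.ReflTransGen (Arc F w) u0 v ∧ tot w v < tot x v := by
  classical
  by_contra hcon
  push_neg at hcon
  set R : Finset (Fin n) :=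
    Finset.univ.filter (fun v => Relation.ReflTransGen (Arc F w) u0 v) with hRdef
  have hu0R : u0 ∈ R := by
    simp only [hRdef, Finset.mem_filter, Finset.mem_univ, true_and]
    exact Relation.ReflTransGen.refl
  have hRclosed : ∀ u ∈ R, ∀ v, Arc F w u v → v ∈ R := by
    intro u hu v harc
    simp only [hRdef, Finset.mem_filter, Finset.mem_univ, true_and] at hu ⊢
    exact hu.tail harc
  -- separation: for `v ∉ R`, `u ∈ R`, every block has a tight set containing v avoiding u
  have hsep : ∀ (i : Fin r) (v : Fin n), v ∉ R → ∀ u ∈ R,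
      ∃ A, v ∈ A ∧ u ∉ A ∧ sA (w i) A = F i A := by
    intro i v hv u hu
    have hnoarc : ¬ Arc F w u v := fun h => hv (hRclosed u hu v h)
    rw [Arc] at hnoarc
    push_neg at hnoarc
    obtain ⟨A, hvA, huA, hge⟩ := hnoarc i
    exact ⟨A, hvA, huA, le_antisymm ((hw i).1 A) hge⟩
  -- the complement of R is tight for every block
  have htight : ∀ i : Fin r, sA (w i) (Finset.univ \ R) = F i (Finset.univ \ R) := by
    intro i
    have hchoice : ∀ v : Fin n, v ∉ R → ∀ u : Fin n, u ∈ R →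
        ∃ A, v ∈ A ∧ u ∉ A ∧ sA (w i) A = F i A := fun v hv u hu => hsep i v hv u hu
    -- for v ∉ R define Av = intersection over u ∈ R of separating tight sets
    set T : Fin n → Fin n → Finset (Fin n) := fun v u =>
      if h : v ∉ R ∧ u ∈ R then (hchoice v h.1 u h.2).choose else Finset.univ with hTdef
    have hTspec : ∀ v ∉ R, ∀ u ∈ R, v ∈ T v u ∧ u ∉ T v u ∧ sA (w i) (T v u) = F i (T v u) := by
      intro v hv u hu
      have h : v ∉ R ∧ u ∈ R := ⟨hv, hu⟩
      simp only [hTdef, dif_pos h]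
      exact (hchoice v h.1 u h.2).choose_spec
    set Av : Fin n → Finset (Fin n) := fun v => R.inf (T v) with hAvdef
    have hAvtight : ∀ v ∉ R, sA (w i) (Av v) = F i (Av v) := by
      intro v hv
      exact tight_inf (hsub i) ((hw i).1) ((hw i).2) R (T v)
        (fun u hu => (hTspec v hv u hu).2.2)
    have hAvmem : ∀ v ∉ R, v ∈ Av v := by
      intro v hv
      rw [hAvdef]
      simp only []
      rw [Finset.mem_inf]
      exact fun u hu => (hTspec v hv u hu).1
    have hAvdisj : ∀ v ∉ R, ∀ u ∈ R, u ∉ Av v := by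
      intro v hv u hu hmem
      rw [hAvdef] at hmem
      simp only [] at hmem
      rw [Finset.mem_inf] at hmem
      exact (hTspec v hv u hu).2.1 (hmem u hu)
    -- complement = sup of the Av
    have hcompl : Finset.univ \ R = (Finset.univ \ R).sup (fun v => Av v) := by
      apply Finset.Subset.antisymm
      · intro v hv
        have hv' : v ∉ R := (Finset.mem_sdiff.mp hv).2
        exact Finset.le_sup (f := fun v => Av v) hv (hAvmem v hv')
      · intro u hu
        rw [Finset.mem_sup] at hu
        obtain ⟨v, hv, huAv⟩ := hu
        have hv' : v ∉ R := (Finset.mem_sdiff.mp hv).2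
        rw [Finset.mem_sdiff]
        refine ⟨Finset.mem_univ u, fun huR => hAvdisj v hv' u huR huAv⟩
    rw [hcompl]
    apply tight_sup (hsub i) ((hw i).1)
    · simp [sA, hnorm i]
    · intro v hv
      exact hAvtight v (Finset.mem_sdiff.mp hv).2
  -- summing up: contradiction
  have hwR : ∀ i : Fin r, sA (w i) R ≤ sA (x i) R := by
    intro i
    have h1 : sA (w i) (Finset.univ \ R) + sA (w i) R = sA (w i) Finset.univ := by
      rw [sA, sA, sA]
      exact Finset.sum_sdiff (Finset.subset_univ R)
    have h2 : sA (x i) (Finset.univ \ R) + sA (x i) R = sA (x i) Finset.univ := by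
      rw [sA, sA, sA]
      exact Finset.sum_sdiff (Finset.subset_univ R)
    have h3 := (hx i).1 (Finset.univ \ R)
    have h4 := htight i
    have h5 := (hw i).2
    have h6 := (hx i).2
    linarith
  have hsum : ∑ v ∈ R, tot w v ≤ ∑ v ∈ R, tot x v := by
    have e1 : ∑ v ∈ R, tot w v = ∑ i, sA (w i) R := by
      simp only [tot, sA]
      exact Finset.sum_comm
    have e2 : ∑ v ∈ R, tot x v = ∑ i, sA (x i) R := by
      simp only [tot, sA]
      exact Finset.sum_comm
    rw [e1, e2]
    exact Finset.sum_le_sum fun i _ => hwR i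
  have hgt : ∑ v ∈ R, tot x v < ∑ v ∈ R, tot w v := by
    apply Finset.sum_lt_sum
    · intro v hv
      simp only [hRdef, Finset.mem_filter, Finset.mem_univ, true_and] at hv
      exact le_of_not_gt fun hlt => absurd (hcon v hv) (not_le.mpr hlt)
    · exact ⟨u0, hu0R, hu0⟩
  linarith

lemma getLast_eq_of_eq {α : Type*} {l l' : List α} (h : l = l') (h1 : l ≠ []) (h2 : l' ≠ []) :
    l.getLast h1 = l'.getLast h2 := by subst h; rfl

lemma exists_nodup_chain_aux {α : Type*} (rel : α → α → Prop) :
    ∀ (N : ℕ) (c : α) (l : List α), l.length ≤ N → List.Chain rel c l →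
    ∃ l' : List α, List.Chain rel c l' ∧ (c :: l').Nodup ∧
      (∀ x ∈ l', x ∈ l) ∧
      (c :: l').getLast (List.cons_ne_nil _ _) = (c :: l).getLast (List.cons_ne_nil _ _) := by
  intro N
  induction N with
  | zero =>
    intro c l hl hch
    have : l = [] := List.length_eq_zero_iff.mp (Nat.le_zero.mp hl)
    subst this
    exact ⟨[], List.Chain.nil, by simp, by simp, rfl⟩
  | succ N ih =>
    intro c l hl hch
    by_cases hc : c ∈ l
    · obtain ⟨l₁, l₂, rfl⟩ := List.append_of_mem hc
      have hch2 : List.Chain rel c l₂ := (List.isChain_cons_split.mp hch).2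
      have hlen : l₂.length ≤ N := by
        simp only [List.length_append, List.length_cons] at hl
        omega
      obtain ⟨l', h1, h2, h3, h4⟩ := ih c l₂ hlen hch2
      refine ⟨l', h1, h2, fun x hx => ?_, ?_⟩
      · have := h3 x hx
        simp only [List.mem_append, List.mem_cons]
        tauto
      · rw [h4]
        have heq : c :: (l₁ ++ c :: l₂) = (c :: l₁) ++ (c :: l₂) := by simp
        calc (c :: l₂).getLast (List.cons_ne_nil _ _)
            = ((c :: l₁) ++ (c :: l₂)).getLast (List.append_ne_nil_of_right_ne_nil _ (List.cons_ne_nil _ _)) :=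
              (List.getLast_append_of_ne_nil _ (List.cons_ne_nil _ _)).symm
          _ = (c :: (l₁ ++ c :: l₂)).getLast (List.cons_ne_nil _ _) :=
              getLast_eq_of_eq heq.symm _ _
    · cases l with
      | nil => exact ⟨[], List.Chain.nil, by simp, by simp, rfl⟩
      | cons v t =>
        have hav : rel c v := (List.chain_cons.mp hch).1
        have hcht : List.Chain rel v t := (List.chain_cons.mp hch).2
        have hlen : t.length ≤ N := by
          simp only [List.length_cons] at hl
          omega
        obtain ⟨l', h1, h2, h3, h4⟩ := ih v t hlen hcht
        have hcnot : c ∉ v :: l' := by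
          intro hmem
          rcases List.mem_cons.mp hmem with h | h
          · exact hc (h ▸ List.mem_cons_self (a := v) (l := t))
          · exact hc (List.mem_cons_of_mem v (h3 c h))
        refine ⟨v :: l', List.chain_cons.mpr ⟨hav, h1⟩,
          List.nodup_cons.mpr ⟨hcnot, h2⟩, ?_, ?_⟩
        · intro x hx
          rcases List.mem_cons.mp hx with h | h
          · exact h ▸ List.mem_cons_self (a := v) (l := t)
          · exact List.mem_cons_of_mem v (h3 x h)
        · rw [List.getLast_cons (List.cons_ne_nil _ _), List.getLast_cons (List.cons_ne_nil _ _), h4]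

lemma exists_nodup_chain {α : Type*} (rel : α → α → Prop) {a b : α}
    (h : Relation.ReflTransGen rel a b) :
    ∃ l : List α, List.Chain rel a l ∧ (a :: l).Nodup ∧
      (a :: l).getLast (List.cons_ne_nil _ _) = b := by
  obtain ⟨l0, hch0, hlast0⟩ := List.exists_isChain_cons_of_relationReflTransGen h
  obtain ⟨l, h1, h2, _, h4⟩ := exists_nodup_chain_aux rel l0.length a l0 le_rfl hch0
  exact ⟨l, h1, h2, by rw [h4, hlast0]⟩


lemma sA_shift (wi : Fin n → ℝ) (c v : Fin n) (ε : ℝ) (A : Finset (Fin n)) :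
    sA (fun u => wi u + ((if u = v then ε else 0) - (if u = c then ε else 0))) A
      = sA wi A + ((if v ∈ A then ε else 0) - (if c ∈ A then ε else 0)) := by
  classical
  simp only [sA, Finset.sum_add_distrib, Finset.sum_sub_distrib, Finset.sum_ite_eq' A]

/-- Moving a small amount of mass along a (nodup) path of arcs. -/
lemma path_move (F : Fin r → Finset (Fin n) → ℝ) (ε : ℝ) (hε : 0 ≤ ε)
    (w : Fin r → Fin n → ℝ) :
    ∀ (l : List (Fin n)) (c : Fin n), List.Chain (Arc F w) c l → (c :: l).Nodup →
    ∃ w' : Fin r → Fin n → ℝ,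
      (∀ i A, sA (w i) A = F i A → sA (w' i) A ≤ sA (w i) A) ∧
      (∀ i A, sA (w' i) A ≤ sA (w i) A + ε * l.length) ∧
      (∀ i, sA (w' i) Finset.univ = sA (w i) Finset.univ) ∧
      (∀ i u, |w' i u - w i u| ≤ 2 * ε) ∧
      (∀ i, |w' i c - w i c| ≤ ε) ∧
      (∀ i u, u ∉ (c :: l) → w' i u = w i u) ∧
      (∀ u, tot w' u = tot w u - (if u = c then ε else 0)
          + (if u = (c :: l).getLast (List.cons_ne_nil _ _) then ε else 0)) := by
  classical
  intro l
  induction l with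
  | nil =>
    intro c _ _
    refine ⟨w, fun i A _ => le_rfl, fun i A => by simp, fun i => rfl,
      fun i u => by simp [hε], fun i => by simp [hε], fun i u _ => rfl, fun u => ?_⟩
    simp only [List.getLast_singleton]
    by_cases h : u = c <;> simp [h]
  | cons v t ih =>
    intro c hch hnd
    obtain ⟨harc, hcht⟩ := List.chain_cons.mp hch
    obtain ⟨b, hb⟩ := harc
    have hnd' : (v :: t).Nodup := (List.nodup_cons.mp hnd).2
    have hcnot : c ∉ v :: t := (List.nodup_cons.mp hnd).1
    have hvc : v ≠ c := fun h => hcnot (h ▸ List.mem_cons_self (a := v) (l := t))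
    obtain ⟨w'', H1, H2, H3, H4, H5, H6, H7⟩ := ih v hcht hnd'
    have hwc : ∀ i, w'' i c = w i c := fun i => H6 i c hcnot
    set gnew : Fin n → ℝ :=
      fun u => w'' b u + ((if u = v then ε else 0) - (if u = c then ε else 0)) with hgnew
    set w' : Fin r → Fin n → ℝ := Function.update w'' b gnew with hw'
    have happ : ∀ i u, w' i u = w'' i u +
        (if i = b then ((if u = v then ε else 0) - (if u = c then ε else 0)) else 0) := by
      intro i u
      by_cases hib : i = b
      · subst hib
        rw [hw', Function.update_self, hgnew]
        simp
      · rw [hw', Function.update_of_ne hib]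
        simp [hib]
    have hsAeq : ∀ A, sA (w' b) A
        = sA (w'' b) A + ((if v ∈ A then ε else 0) - (if c ∈ A then ε else 0)) := by
      intro A
      rw [hw', Function.update_self, hgnew]
      exact sA_shift (w'' b) c v ε A
    have hsAne : ∀ i, i ≠ b → w' i = w'' i := by
      intro i hib
      rw [hw', Function.update_of_ne hib]
    refine ⟨w', ?_, ?_, ?_, ?_, ?_, ?_, ?_⟩
    · -- tight decrease
      intro i A htA
      by_cases hib : i = b
      · subst hib
        rw [hsAeq A]
        by_cases hvA : v ∈ A
        · have hcA : c ∈ A := by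
            by_contra hcA
            exact absurd htA (ne_of_lt (hb A hvA hcA))
          simp only [if_pos hvA, if_pos hcA, sub_self, add_zero]
          exact H1 i A htA
        · have h1 : (0:ℝ) ≤ (if c ∈ A then ε else 0) := by positivity
          simp only [if_neg hvA]
          linarith [H1 i A htA]
      · rw [hsAne i hib]
        exact H1 i A htA
    · -- growth bound
      intro i A
      have hlen : (ε : ℝ) * (t.length : ℝ) + ε = ε * ((v :: t).length : ℝ) := by
        simp only [List.length_cons]
        push_cast
        ring
      by_cases hib : i = b
      · subst hib
        rw [hsAeq A]
        have hv' : (if v ∈ A then ε else 0) ≤ ε := by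
          by_cases hvA : v ∈ A <;> simp [hvA, hε]
        have hc' : (0:ℝ) ≤ (if c ∈ A then ε else 0) := by positivity
        have h2 := H2 i A
        linarith [hlen]
      · rw [hsAne i hib]
        have h2 := H2 i A
        have : (0:ℝ) ≤ ε := hε
        nlinarith [hlen]
    · -- univ preserved
      intro i
      by_cases hib : i = b
      · subst hib
        rw [hsAeq Finset.univ]
        simp [H3 i]
      · rw [hsAne i hib]
        exact H3 i
    · -- coordinate bound
      intro i u
      rw [happ i u]
      by_cases hib : i = b
      · simp only [if_pos hib]
        by_cases huv : u = v
        · rw [if_pos huv, if_neg (huv ▸ hvc)]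
          have h5 : |w'' i u - w i u| ≤ ε := by rw [huv]; exact H5 i
          rw [abs_le] at h5 ⊢
          constructor <;> linarith [h5.1, h5.2]
        · by_cases huc : u = c
          · rw [if_neg huv, if_pos huc]
            have heq : w'' i u = w i u := by rw [huc]; exact hwc i
            rw [abs_le]
            constructor <;> [skip; skip] <;> rw [heq] <;> [linarith; linarith]
          · rw [if_neg huv, if_neg huc]
            have h4 := H4 i u
            rw [abs_le] at h4 ⊢
            constructor <;> linarith [h4.1, h4.2]
      · simp only [if_neg hib, add_zero]
        exact H4 i u
    · -- head bound
      intro i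
      rw [happ i c]
      by_cases hib : i = b
      · rw [if_pos hib, if_neg (Ne.symm hvc), if_pos rfl]
        have heq : w'' i c = w i c := hwc i
        rw [abs_le]
        constructor <;> rw [heq] <;> linarith
      · rw [if_neg hib]
        have heq : w'' i c = w i c := hwc i
        rw [abs_le]
        constructor <;> rw [heq] <;> linarith
    · -- untouched
      intro i u hu
      have h1 : u ∉ v :: t := fun h => hu (List.mem_cons_of_mem c h)
      have h2 : u ≠ v := fun h => h1 (h ▸ List.mem_cons_self (a := v) (l := t))
      have h3 : u ≠ c := fun h => hu (h ▸ List.mem_cons_self (a := c) (l := v :: t))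
      rw [happ i u, H6 i u h1]
      simp [h2, h3]
    · -- total sums
      intro u
      have hsum : tot w' u = tot w'' u + ((if u = v then ε else 0) - (if u = c then ε else 0)) := by
        simp only [tot]
        rw [Finset.sum_congr rfl (fun i _ => happ i u), Finset.sum_add_distrib,
          Finset.sum_ite_eq' Finset.univ b]
        simp
      rw [hsum, H7 u]
      have hlast : (c :: v :: t).getLast (List.cons_ne_nil _ _)
          = (v :: t).getLast (List.cons_ne_nil _ _) := List.getLast_cons (List.cons_ne_nil _ _)
      rw [hlast]
      ring


/-- surplus function -/
def Dp (x w : Fin r → Fin n → ℝ) : ℝ := ∑ u, max (tot w u - tot x u) 0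

lemma Dp_nonneg (x w : Fin r → Fin n → ℝ) : 0 ≤ Dp x w :=
  Finset.sum_nonneg fun u _ => le_max_right _ _

lemma tot_sum_eq {F : Fin r → Finset (Fin n) → ℝ} {w : Fin r → Fin n → ℝ} (hw : PFeas F w) :
    ∑ u, tot w u = ∑ i, F i Finset.univ := by
  have : ∑ u, tot w u = ∑ i, sA (w i) Finset.univ := by
    simp only [tot, sA]
    exact Finset.sum_comm
  rw [this]
  exact Finset.sum_congr rfl fun i _ => (hw i).2

/-- One augmentation step: strictly decrease the surplus while moving each
coordinate by at most twice the decrease. -/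
lemma step (hn : 1 ≤ n) {F : Fin r → Finset (Fin n) → ℝ}
    (hsub : ∀ i, Submodular (F i)) (hnorm : ∀ i, F i ∅ = 0)
    {x w : Fin r → Fin n → ℝ} (hx : PFeas F x) (hw : PFeas F w)
    (hD : 0 < Dp x w) :
    ∃ w', PFeas F w' ∧ Dp x w' < Dp x w ∧
      ∀ i u, |w' i u - w i u| ≤ 2 * (Dp x w - Dp x w') := by
  classical
  -- find a surplus element
  have hsurp : ∃ u0, tot x u0 < tot w u0 := by
    by_contra hcon
    push_neg at hcon
    have : Dp x w = 0 := Finset.sum_eq_zero fun u _ => max_eq_right (by linarith [hcon u])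
    linarith
  obtain ⟨u0, hu0⟩ := hsurp
  obtain ⟨v, hRTG, hdef⟩ := reach_deficit hsub hnorm hw hx hu0
  obtain ⟨l, hch, hnodup, hlast⟩ := exists_nodup_chain (Arc F w) hRTG
  have huv : u0 ≠ v := fun h => by rw [h] at hu0; linarith
  -- path length bound
  have hlenn : (l.length : ℝ) ≤ (n : ℝ) := by
    have h1 : (u0 :: l).length ≤ Fintype.card (Fin n) := List.Nodup.length_le_card hnodup
    simp only [List.length_cons, Fintype.card_fin] at h1
    exact_mod_cast Nat.le_of_succ_le h1
  -- minimum positive slack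
  set S : Finset (Fin r × Finset (Fin n)) :=
    Finset.univ.filter (fun p => sA (w p.1) p.2 < F p.1 p.2) with hSdef
  set γ : ℝ := if hS : S.Nonempty then S.inf' hS (fun p => F p.1 p.2 - sA (w p.1) p.2) else 1
    with hγdef
  have hγpos : 0 < γ := by
    rw [hγdef]
    split_ifs with hS
    · rw [Finset.lt_inf'_iff]
      intro p hp
      rw [hSdef, Finset.mem_filter] at hp
      linarith [hp.2]
    · norm_num
  have hγle : ∀ i A, sA (w i) A < F i A → γ ≤ F i A - sA (w i) A := by
    intro i A hlt
    have hmem : (i, A) ∈ S := by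
      rw [hSdef, Finset.mem_filter]
      exact ⟨Finset.mem_univ _, hlt⟩
    have hS : S.Nonempty := ⟨_, hmem⟩
    rw [hγdef, dif_pos hS]
    exact Finset.inf'_le _ hmem
  set σ : ℝ := tot w u0 - tot x u0 with hσdef
  set δ : ℝ := tot x v - tot w v with hδdef
  have hσpos : 0 < σ := by rw [hσdef]; linarith
  have hδpos : 0 < δ := by rw [hδdef]; linarith
  set ε : ℝ := min (min (γ / n) σ) δ with hεdef
  have hnpos : (0:ℝ) < n := by exact_mod_cast Nat.lt_of_lt_of_le Nat.zero_lt_one hn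
  have hεpos : 0 < ε := by
    rw [hεdef]
    apply lt_min (lt_min _ hσpos) hδpos
    positivity
  have hεσ : ε ≤ σ := le_trans (min_le_left _ _) (min_le_right _ _)
  have hεδ : ε ≤ δ := min_le_right _ _
  have hεγn : ε ≤ γ / n := le_trans (min_le_left _ _) (min_le_left _ _)
  have hεlen : ε * l.length ≤ γ := by
    calc ε * l.length ≤ (γ / n) * n := by
          apply mul_le_mul hεγn hlenn (by positivity) (by positivity)
      _ = γ := by field_simp
  obtain ⟨w', P1, P2, P3, P4, P5, P6, P7⟩ :=
    path_move F ε (le_of_lt hεpos) w l u0 hch hnodup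
  have hfeas : PFeas F w' := by
    intro i
    constructor
    · intro A
      by_cases ht : sA (w i) A = F i A
      · linarith [P1 i A ht]
      · have hlt : sA (w i) A < F i A := lt_of_le_of_ne ((hw i).1 A) ht
        have := hγle i A hlt
        have := P2 i A
        linarith [hεlen]
    · rw [P3 i]
      exact (hw i).2
  have htotw' : ∀ u, tot w' u = tot w u - (if u = u0 then ε else 0) + (if u = v then ε else 0) := by
    intro u
    rw [P7 u, hlast]
  -- Dp decreases by exactly ε
  have hDdiff : Dp x w - Dp x w' = ε := by
    rw [Dp, Dp, ← Finset.sum_sub_distrib]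
    rw [Finset.sum_eq_single u0]
    · rw [htotw' u0, if_pos rfl, if_neg huv]
      have h1 : max (tot w u0 - tot x u0) 0 = σ := max_eq_left (le_of_lt hσpos)
      have h2 : max (tot w u0 - ε + 0 - tot x u0) 0 = tot w u0 - ε + 0 - tot x u0 :=
        max_eq_left (by linarith)
      rw [h1, h2, hσdef]
      ring
    · intro u _ hne
      rw [htotw' u, if_neg hne]
      by_cases huv' : u = v
      · rw [if_pos huv']
        have h1 : max (tot w u - tot x u) 0 = 0 := by
          apply max_eq_right
          rw [huv']
          linarith
        have h2 : max (tot w u - 0 + ε - tot x u) 0 = 0 := by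
          apply max_eq_right
          rw [huv']
          linarith
        rw [h1, h2]
        ring
      · rw [if_neg huv']
        simp
    · intro h
      exact absurd (Finset.mem_univ u0) h
  refine ⟨w', hfeas, by linarith, ?_⟩
  intro i u
  rw [hDdiff]
  exact P4 i u


lemma continuous_sA (i : Fin r) (A : Finset (Fin n)) :
    Continuous (fun w : Fin r → Fin n → ℝ => sA (w i) A) := by
  apply continuous_finset_sum
  intro u _
  exact (continuous_apply u).comp (continuous_apply i)

lemma continuous_tot (u : Fin n) :
    Continuous (fun w : Fin r → Fin n → ℝ => tot w u) := by
  apply continuous_finset_sum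
  intro i _
  exact (continuous_apply u).comp (continuous_apply i)

lemma continuous_Dp (x : Fin r → Fin n → ℝ) :
    Continuous (fun w : Fin r → Fin n → ℝ => Dp x w) := by
  apply continuous_finset_sum
  intro u _
  exact ((continuous_tot u).sub continuous_const).max continuous_const

lemma isClosed_PFeas (F : Fin r → Finset (Fin n) → ℝ) :
    IsClosed {w : Fin r → Fin n → ℝ | PFeas F w} := by
  have : {w : Fin r → Fin n → ℝ | PFeas F w} =
      (⋂ i, ⋂ A, {w | sA (w i) A ≤ F i A}) ∩ (⋂ i, {w | sA (w i) Finset.univ = F i Finset.univ}) := by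
    ext w
    simp only [Set.mem_inter_iff, Set.mem_iInter, Set.mem_setOf_eq]
    constructor
    · exact fun h => ⟨fun i A => (h i).1 A, fun i => (h i).2⟩
    · exact fun h i => ⟨fun A => h.1 i A, h.2 i⟩
  rw [this]
  apply IsClosed.inter
  · exact isClosed_iInter fun i => isClosed_iInter fun A =>
      isClosed_le (continuous_sA i A) continuous_const
  · exact isClosed_iInter fun i => isClosed_eq (continuous_sA i Finset.univ) continuous_const

lemma isCompact_PFeas (F : Fin r → Finset (Fin n) → ℝ) :
    IsCompact {w : Fin r → Fin n → ℝ | PFeas F w} := by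
  classical
  apply IsCompact.of_isClosed_subset
    (isCompact_univ_pi fun i => isCompact_univ_pi fun u =>
      isCompact_Icc (a := F i Finset.univ - F i (Finset.univ \ {u})) (b := F i {u}))
    (isClosed_PFeas F)
  intro w hw
  rw [Set.mem_univ_pi]
  intro i
  rw [Set.mem_univ_pi]
  intro u
  rw [Set.mem_Icc]
  have h1 : w i u ≤ F i {u} := by
    have := (hw i).1 {u}
    simpa [sA] using this
  have h2 : sA (w i) Finset.univ = sA (w i) (Finset.univ \ {u}) + w i u := by
    rw [sA, sA]
    exact Finset.sum_eq_sum_sdiff_singleton_add (Finset.mem_univ u) _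
  have h3 := (hw i).1 (Finset.univ \ {u})
  have h4 := (hw i).2
  constructor
  · linarith
  · exact h1

/-- The key lemma: a feasible point with block sums equal to those of `x`,
close to `y` in every coordinate. -/
lemma key (hn : 1 ≤ n) {F : Fin r → Finset (Fin n) → ℝ}
    (hsub : ∀ i, Submodular (F i)) (hnorm : ∀ i, F i ∅ = 0)
    {x y : Fin r → Fin n → ℝ} (hx : PFeas F x) (hy : PFeas F y) :
    ∃ z, PFeas F z ∧ (∀ u, tot z u = tot x u) ∧
      (∀ i u, |z i u - y i u| ≤ 2 * Dp x y) := by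
  classical
  set W : Set (Fin r → Fin n → ℝ) :=
    {w | PFeas F w ∧ ∀ i u, |w i u - y i u| ≤ 2 * (Dp x y - Dp x w)} with hWdef
  have hWclosed : IsClosed W := by
    have : W = {w | PFeas F w} ∩
        ⋂ i, ⋂ u, {w | |w i u - y i u| ≤ 2 * (Dp x y - Dp x w)} := by
      ext w
      simp only [hWdef, Set.mem_inter_iff, Set.mem_iInter, Set.mem_setOf_eq]
    rw [this]
    apply (isClosed_PFeas F).inter
    apply isClosed_iInter
    intro i
    apply isClosed_iInter
    intro u
    apply isClosed_le
    · exact (((continuous_apply u).comp (continuous_apply i : Continuous fun w : Fin r → Fin n → ℝ => w i)).sub continuous_const).abs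
    · exact continuous_const.mul (continuous_const.sub (continuous_Dp x))
  have hWcompact : IsCompact W :=
    IsCompact.of_isClosed_subset (isCompact_PFeas F) hWclosed (fun w hw => hw.1)
  have hWne : W.Nonempty := ⟨y, hy, fun i u => by simp [Dp_nonneg]⟩
  obtain ⟨z, hzW, hzmin⟩ := hWcompact.exists_isMinOn hWne (continuous_Dp x).continuousOn
  have hDz : Dp x z = 0 := by
    by_contra hne
    have hDzpos : 0 < Dp x z := lt_of_le_of_ne (Dp_nonneg x z) (Ne.symm hne)
    obtain ⟨w', hw'feas, hw'lt, hw'coord⟩ := step hn hsub hnorm hx hzW.1 hDzpos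
    have hw'W : w' ∈ W := by
      refine ⟨hw'feas, fun i u => ?_⟩
      have h1 := hw'coord i u
      have h2 := hzW.2 i u
      calc |w' i u - y i u| ≤ |w' i u - z i u| + |z i u - y i u| := by
            have := abs_sub_abs_le_abs_sub (w' i u - y i u) 0
            calc |w' i u - y i u| = |(w' i u - z i u) + (z i u - y i u)| := by ring_nf
              _ ≤ |w' i u - z i u| + |z i u - y i u| := abs_add_le _ _
        _ ≤ 2 * (Dp x z - Dp x w') + 2 * (Dp x y - Dp x z) := add_le_add h1 h2
        _ = 2 * (Dp x y - Dp x w') := by ring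
    have := hzmin hw'W
    simp only [Set.mem_setOf_eq] at this
    linarith [this]
  have htotle : ∀ u, tot z u ≤ tot x u := by
    intro u
    by_contra hlt
    push_neg at hlt
    have hterm : 0 < max (tot z u - tot x u) 0 := by
      rw [max_eq_left (by linarith)]
      linarith
    have : 0 < Dp x z := by
      rw [Dp]
      exact Finset.sum_pos' (fun u' _ => le_max_right _ _) ⟨u, Finset.mem_univ u, hterm⟩
    linarith
  have htoteq : ∀ u, tot z u = tot x u := by
    have hsum : ∑ u, (tot x u - tot z u) = 0 := by
      rw [Finset.sum_sub_distrib, tot_sum_eq hx, tot_sum_eq hzW.1]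
      ring
    intro u
    have := (Finset.sum_eq_zero_iff_of_nonneg
      (fun u' (_ : u' ∈ Finset.univ) => by linarith [htotle u'])).mp hsum u (Finset.mem_univ u)
    linarith
  refine ⟨z, hzW.1, htoteq, fun i u => ?_⟩
  have := hzW.2 i u
  rw [hDz] at this
  linarith [this]

/-- `2 * Dp x y` equals the ℓ¹ distance between the total vectors. -/
lemma two_Dp_eq {F : Fin r → Finset (Fin n) → ℝ} {x y : Fin r → Fin n → ℝ}
    (hx : PFeas F x) (hy : PFeas F y) :
    2 * Dp x y = ∑ u, |tot y u - tot x u| := by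
  have hsum : ∑ u, (tot y u - tot x u) = 0 := by
    rw [Finset.sum_sub_distrib, tot_sum_eq hy, tot_sum_eq hx]
    ring
  have : ∀ u : Fin n, 2 * max (tot y u - tot x u) 0 = |tot y u - tot x u| + (tot y u - tot x u) := by
    intro u
    rcases le_or_gt (tot y u - tot x u) 0 with h | h
    · rw [max_eq_right h, abs_of_nonpos h]
      ring
    · rw [max_eq_left (le_of_lt h), abs_of_pos h]
      ring
  rw [Dp, Finset.mul_sum]
  rw [Finset.sum_congr rfl fun u _ => this u, Finset.sum_add_distrib, hsum, add_zero]

end S7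

/-- For `y ∈ 𝒴` and `y*` an optimal solution of (Prox-DSM) closest to `y`
(so `g(y*)` is the optimal value `g*`),
`⟨∇g(y), y* - y⟩ ≤ (g* - g(y)) - (1/(n²r))‖y - y*‖²`. -/


theorem statement7 (n r : ℕ) (hn : 1 ≤ n) (hr : 1 ≤ r)
    (F : Fin r → Finset (Fin n) → ℝ)
    (hsub : ∀ i, Submodular (F i)) (hnorm : ∀ i, F i ∅ = 0)
    (y ystar : Vec n r) (hy : y ∈ feas n r F)
    (hopt : IsOptimal n r F ystar)
    (hclosest : ∀ z : Vec n r, IsOptimal n r F z → ‖y - ystar‖ ≤ ‖y - z‖) :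
    ⟪gradg n r y, ystar - y⟫
      ≤ (g n r ystar - g n r y) - (1 / ((n : ℝ) ^ 2 * r)) * ‖y - ystar‖ ^ 2 := by
  classical
  set Y : Fin r → Fin n → ℝ := fun i u => y i u with hYdef
  set X : Fin r → Fin n → ℝ := fun i u => ystar i u with hXdef
  have hYf : S7.PFeas F Y := fun i => ⟨fun A => (hy i).1 A, (hy i).2⟩
  have hXf : S7.PFeas F X := fun i => ⟨fun A => (hopt.1 i).1 A, (hopt.1 i).2⟩
  obtain ⟨z, hzf, hztot, hzcoord⟩ := S7.key hn hsub hnorm hXf hYf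
  set T : ℝ := 2 * S7.Dp X Y with hTdef
  have hTeq : T = ∑ u, |S7.tot Y u - S7.tot X u| := S7.two_Dp_eq hXf hYf
  have hTnn : 0 ≤ T := by
    rw [hTdef]
    linarith [S7.Dp_nonneg X Y]
  -- the Vec version of z
  set zV : Vec n r := WithLp.toLp 2 (fun i => WithLp.toLp 2 (z i)) with hzVdef
  have hzVapp : ∀ i u, zV i u = z i u := fun i u => rfl
  have hzVfeas : zV ∈ feas n r F := fun i => ⟨fun A => (hzf i).1 A, (hzf i).2⟩
  set s : EuclideanSpace ℝ (Fin n) := ∑ i, y i with hsdef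
  set p : EuclideanSpace ℝ (Fin n) := ∑ i, ystar i with hpdef
  have happly : ∀ (f : Fin r → EuclideanSpace ℝ (Fin n)) (u : Fin n),
      (∑ i, f i) u = ∑ i, f i u := fun f u => by rw [WithLp.ofLp_sum, Finset.sum_apply]
  have hsz : (∑ i, zV i) = p := by
    ext u
    rw [happly, hpdef, happly]
    exact hztot u
  have hgz : g n r zV = g n r ystar := by
    rw [g, g, hsz, hpdef]
  have hzopt : IsOptimal n r F zV := by
    refine ⟨hzVfeas, fun t ht => ?_⟩
    rw [hgz]
    exact hopt.2 t ht
  have hd : ‖y - ystar‖ ≤ ‖y - zV‖ := hclosest zV hzopt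
  -- norm bound for ‖y - zV‖
  have hsub_apply : ∀ (a b : Vec n r) (i : Fin r) (u : Fin n), (a - b) i u = a i u - b i u :=
    fun a b i u => rfl
  have hcoord : ∀ i u, |y i u - z i u| ≤ T := by
    intro i u
    rw [abs_sub_comm]
    exact hzcoord i u
  have hnormyz : ‖y - zV‖ ^ 2 ≤ ((r : ℝ) * n) * T ^ 2 := by
    have e1 : ‖y - zV‖ ^ 2 = ∑ i, ‖(y - zV) i‖ ^ 2 := PiLp.norm_sq_eq_of_L2 _ _
    have e2 : ∀ i : Fin r, ‖(y - zV) i‖ ^ 2 = ∑ u, (y i u - z i u) ^ 2 := by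
      intro i
      rw [PiLp.norm_sq_eq_of_L2]
      refine Finset.sum_congr rfl fun u _ => ?_
      rw [show (y - zV) i u = y i u - z i u from rfl, Real.norm_eq_abs, sq_abs]
    rw [e1]
    calc ∑ i, ‖(y - zV) i‖ ^ 2 = ∑ i : Fin r, ∑ u, (y i u - z i u) ^ 2 :=
          Finset.sum_congr rfl fun i _ => e2 i
      _ ≤ ∑ i : Fin r, ∑ u : Fin n, T ^ 2 := by
          refine Finset.sum_le_sum fun i _ => Finset.sum_le_sum fun u _ => ?_
          have h := hcoord i u
          have h' := abs_nonneg (y i u - z i u)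
          calc (y i u - z i u) ^ 2 = |y i u - z i u| ^ 2 := (sq_abs _).symm
            _ ≤ T ^ 2 := by nlinarith
      _ = ((r : ℝ) * n) * T ^ 2 := by
          simp [Finset.sum_const, Finset.card_univ]
          ring
  have hT2 : T ^ 2 ≤ (n : ℝ) * ∑ u, (S7.tot Y u - S7.tot X u) ^ 2 := by
    rw [hTeq]
    calc (∑ u, |S7.tot Y u - S7.tot X u|) ^ 2
        ≤ (Finset.univ.card : ℝ) * ∑ u, |S7.tot Y u - S7.tot X u| ^ 2 :=
          sq_sum_le_card_mul_sum_sq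
      _ = (n : ℝ) * ∑ u, (S7.tot Y u - S7.tot X u) ^ 2 := by
          simp [Finset.card_univ, sq_abs]
  have hsp : ∑ u, (S7.tot Y u - S7.tot X u) ^ 2 = ‖s - p‖ ^ 2 := by
    rw [PiLp.norm_sq_eq_of_L2]
    refine (Finset.sum_congr rfl fun u _ => ?_).symm
    rw [show (s - p) u = s u - p u from rfl, hsdef, hpdef, happly, happly,
      Real.norm_eq_abs, sq_abs]
    rfl
  have hmain : ‖y - ystar‖ ^ 2 ≤ ((n : ℝ) ^ 2 * r) * ‖p - s‖ ^ 2 := by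
    have h1 : ‖y - ystar‖ ^ 2 ≤ ‖y - zV‖ ^ 2 := by
      have := pow_le_pow_left₀ (norm_nonneg (y - ystar)) hd 2
      exact this
    have h2 : ((r : ℝ) * n) * T ^ 2 ≤ ((r : ℝ) * n) * ((n : ℝ) * ‖s - p‖ ^ 2) := by
      apply mul_le_mul_of_nonneg_left _ (by positivity)
      rw [← hsp]
      exact hT2
    have h3 : ‖s - p‖ = ‖p - s‖ := norm_sub_rev s p
    calc ‖y - ystar‖ ^ 2 ≤ ‖y - zV‖ ^ 2 := h1
      _ ≤ ((r : ℝ) * n) * T ^ 2 := hnormyz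
      _ ≤ ((r : ℝ) * n) * ((n : ℝ) * ‖s - p‖ ^ 2) := h2
      _ = ((n : ℝ) ^ 2 * r) * ‖p - s‖ ^ 2 := by rw [h3]; ring
  -- inner product computation
  have hinner : ⟪gradg n r y, ystar - y⟫ = 2 * ⟪s, p - s⟫ := by
    calc ⟪gradg n r y, ystar - y⟫ = ∑ i, ⟪gradBlock n r y, (ystar - y) i⟫ := PiLp.inner_apply _ _
      _ = ∑ i, ⟪(2 : ℝ) • s, ystar i - y i⟫ := by
          refine Finset.sum_congr rfl fun i _ => ?_
          rfl
      _ = ⟪(2 : ℝ) • s, ∑ i, (ystar i - y i)⟫ := (inner_sum _ _ _).symm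
      _ = ⟪(2 : ℝ) • s, p - s⟫ := by rw [Finset.sum_sub_distrib, ← hpdef, ← hsdef]
      _ = 2 * ⟪s, p - s⟫ := real_inner_smul_left _ _ _
  have hgdiff : g n r ystar - g n r y = ‖p‖ ^ 2 - ‖s‖ ^ 2 := by
    rw [g, g, ← hpdef, ← hsdef]
  have hid : 2 * ⟪s, p - s⟫ = (‖p‖ ^ 2 - ‖s‖ ^ 2) - ‖p - s‖ ^ 2 := by
    have h1 : ‖p - s‖ ^ 2 = ‖p‖ ^ 2 - 2 * ⟪p, s⟫ + ‖s‖ ^ 2 := norm_sub_sq_real p s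
    have h2 : ⟪s, p - s⟫ = ⟪s, p⟫ - ⟪s, s⟫ := inner_sub_right _ _ _
    have h3 : ⟪s, s⟫ = ‖s‖ ^ 2 := real_inner_self_eq_norm_sq s
    have h4 : ⟪s, p⟫ = ⟪p, s⟫ := real_inner_comm p s
    linarith
  have hc : (0 : ℝ) < (n : ℝ) ^ 2 * r := by
    have h1 : (0:ℝ) < (n:ℝ) := by exact_mod_cast Nat.lt_of_lt_of_le Nat.zero_lt_one hn
    have h2 : (0:ℝ) < (r:ℝ) := by exact_mod_cast Nat.lt_of_lt_of_le Nat.zero_lt_one hr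
    positivity
  have hfinal : (1 / ((n : ℝ) ^ 2 * r)) * ‖y - ystar‖ ^ 2 ≤ ‖p - s‖ ^ 2 := by
    rw [one_div, inv_mul_le_iff₀ hc]
    calc ‖y - ystar‖ ^ 2 ≤ ((n : ℝ) ^ 2 * r) * ‖p - s‖ ^ 2 := hmain
      _ = (n : ℝ) ^ 2 * r * ‖p - s‖ ^ 2 := by ring
  rw [hinner, hgdiff, hid]
  linarith
end
end

section
/- Let y ∈ 𝒴 and let y* be an optimal solution of (Prox-DSM) closest to y. Then ⟨∇g(y), y* − y⟩ ≤ −(2/(n²r)) ‖y − y*‖². -/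
open scoped RealInnerProductSpace Pointwise

noncomputable section

lemma exists_nodup_chain_aux {α : Type*} {R : α → α → Prop} :
    ∀ (N : ℕ) (l : List α) (u v : α), l.length ≤ N → List.Chain R u l →
      (u :: l).getLast? = some v →
      ∃ l' : List α, List.Chain R u l' ∧ (u :: l').getLast? = some v ∧
        (u :: l').Nodup ∧ l' ⊆ l := by
  intro N
  induction N with
  | zero =>
    intro l u v hlen hc hlast
    have : l = [] := List.eq_nil_of_length_eq_zero (by omega)
    subst this
    exact ⟨[], List.Chain.nil, hlast, by simp, by simp⟩
  | succ N ih =>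
    intro l u v hlen hc hlast
    classical
    by_cases hu : u ∈ l
    · obtain ⟨l₁, l₂, rfl⟩ := List.append_of_mem hu
      have hc2 : List.Chain R u l₂ := (List.isChain_cons_split.mp hc).2
      have hlast2 : (u :: l₂).getLast? = some v := by
        rw [show u :: (l₁ ++ u :: l₂) = (u :: l₁) ++ (u :: l₂) by simp,
          List.getLast?_append_of_ne_nil _ (List.cons_ne_nil _ _)] at hlast
        exact hlast
      have hlen2 : l₂.length ≤ N := by
        simp [List.length_append] at hlen; omega
      obtain ⟨l', h1, h2, h3, h4⟩ := ih l₂ u v hlen2 hc2 hlast2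
      exact ⟨l', h1, h2, h3, fun x hx => by simp [h4 hx]⟩
    · match l, hc with
      | [], _ => exact ⟨[], List.Chain.nil, hlast, by simp, by simp⟩
      | w :: t, hc =>
        have hRuw : R u w := (List.chain_cons.mp hc).1
        have hct : List.Chain R w t := (List.chain_cons.mp hc).2
        have hlast' : (w :: t).getLast? = some v := by
          rwa [List.getLast?_cons_cons] at hlast
        have hlent : t.length ≤ N := by simp at hlen; omega
        obtain ⟨t', h1, h2, h3, h4⟩ := ih t w v hlent hct hlast'
        refine ⟨w :: t', List.chain_cons.mpr ⟨hRuw, h1⟩, ?_, ?_, ?_⟩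
        · rwa [List.getLast?_cons_cons]
        · refine List.nodup_cons.mpr ⟨?_, h3⟩
          intro hmem
          rcases List.mem_cons.mp hmem with h | h
          · exact hu (h ▸ (List.mem_cons_self : w ∈ w :: t))
          · exact hu (List.mem_cons_of_mem w (h4 h))
        · intro x hx
          rcases List.mem_cons.mp hx with h | h
          · exact h ▸ (List.mem_cons_self : w ∈ w :: t)
          · exact List.mem_cons_of_mem w (h4 h)

/-- From reflexive-transitive closure, extract a duplicate-free chain. -/
lemma exists_nodup_chain {α : Type*} {R : α → α → Prop} {u v : α}
    (h : Relation.ReflTransGen R u v) :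
    ∃ l : List α, List.Chain R u l ∧ (u :: l).getLast? = some v ∧ (u :: l).Nodup := by
  obtain ⟨l, hc, hl⟩ := List.exists_isChain_cons_of_relationReflTransGen h
  have : (u :: l).getLast? = some v := by
    rw [List.getLast?_eq_getLast_of_ne_nil (List.cons_ne_nil _ _), hl]
  obtain ⟨l', h1, h2, h3, _⟩ := exists_nodup_chain_aux l.length l u v le_rfl hc this
  exact ⟨l', h1, h2, h3⟩


lemma chain_to_fun {α : Type*} [Inhabited α] {R : α → α → Prop} {u v : α} {l : List α}
    (h1 : List.Chain R u l) (h2 : (u :: l).getLast? = some v) (h3 : (u :: l).Nodup)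
    (hne : u ≠ v) :
    ∃ (k : ℕ) (f : ℕ → α), 0 < k ∧ f 0 = u ∧ f k = v ∧
      (∀ j, j < k → R (f j) (f (j + 1))) ∧
      (∀ j j', j ≤ k → j' ≤ k → f j = f j' → j = j') := by
  set p : List α := u :: l with hp
  have hc' : List.Chain' R p := h1
  refine ⟨l.length, fun j => p.getD j u, ?_, by simp [hp], ?_, ?_, ?_⟩
  · rcases l with _ | ⟨w, t⟩
    · simp [hp] at h2; exact absurd h2 hne
    · simp
  · have hlen : l.length < p.length := by simp [hp]
    have h4 : p.getLast? = p[l.length]? := by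
      rw [List.getLast?_eq_getElem?]; simp [hp]
    rw [h4, List.getElem?_eq_getElem hlen] at h2
    simp only [List.getD_eq_getElem?_getD, List.getElem?_eq_getElem hlen]
    simpa using (Option.some_injective _ h2)
  · intro j hj
    have hj1 : j < p.length := by simp [hp]; omega
    have hj2 : j + 1 < p.length := by simp [hp]; omega
    have h5 := List.isChain_iff_getElem.mp hc' j (by simp [hp]; omega)
    simp only [List.getD_eq_getElem?_getD, List.getElem?_eq_getElem hj1,
      List.getElem?_eq_getElem hj2]
    simpa [List.get_eq_getElem] using h5
  · intro j j' hj hj' heq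
    have hj1 : j < p.length := by simp [hp]; omega
    have hj2 : j' < p.length := by simp [hp]; omega
    have hinj := List.nodup_iff_injective_get.mp h3
    simp only [List.getD_eq_getElem?_getD, List.getElem?_eq_getElem hj1,
      List.getElem?_eq_getElem hj2] at heq
    have h6 : p.get ⟨j, hj1⟩ = p.get ⟨j', hj2⟩ := by
      simpa [List.get_eq_getElem] using heq
    have := hinj h6
    simpa using this

namespace Aux

def TightAt {n : ℕ} (F : Finset (Fin n) → ℝ) (w : EuclideanSpace ℝ (Fin n))
    (A : Finset (Fin n)) : Prop :=
  ∑ i ∈ A, w i = F A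

variable {n : ℕ} {F' : Finset (Fin n) → ℝ} {w : EuclideanSpace ℝ (Fin n)}

lemma tight_univ (hw : w ∈ basePolytope n F') : TightAt F' w Finset.univ := hw.2

lemma tight_empty (hF0 : F' ∅ = 0) : TightAt F' w ∅ := by simp [TightAt, hF0]

lemma tight_inter_union (hF : Submodular F') (hw : w ∈ basePolytope n F')
    {A B : Finset (Fin n)} (hA : TightAt F' w A) (hB : TightAt F' w B) :
    TightAt F' w (A ∩ B) ∧ TightAt F' w (A ∪ B) := by
  have key : ∑ i ∈ A ∪ B, w i + ∑ i ∈ A ∩ B, w i = ∑ i ∈ A, w i + ∑ i ∈ B, w i :=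
    Finset.sum_union_inter
  have h1 := hw.1 (A ∩ B)
  have h2 := hw.1 (A ∪ B)
  have h3 := hF A B
  unfold TightAt at *
  constructor <;> linarith

lemma exists_min_tight (hF : Submodular F') (hw : w ∈ basePolytope n F') (v : Fin n) :
    ∃ D : Finset (Fin n), TightAt F' w D ∧ v ∈ D ∧
      ∀ A : Finset (Fin n), TightAt F' w A → v ∈ A → D ⊆ A := by
  classical
  obtain ⟨D, hD, hmin⟩ := Finset.exists_min_image
    (Finset.univ.filter fun A : Finset (Fin n) => TightAt F' w A ∧ v ∈ A) Finset.card
    ⟨Finset.univ, by simp [tight_univ hw]⟩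
  simp only [Finset.mem_filter, Finset.mem_univ, true_and] at hD hmin
  refine ⟨D, hD.1, hD.2, fun A hA hvA => ?_⟩
  have hinter := (tight_inter_union hF hw hD.1 hA).1
  have hle := hmin (D ∩ A) ⟨hinter, Finset.mem_inter.mpr ⟨hD.2, hvA⟩⟩
  have hsub : D ∩ A ⊆ D := Finset.inter_subset_left
  have : D ∩ A = D := Finset.eq_of_subset_of_card_le hsub hle
  exact fun x hx => Finset.mem_inter.mp (this ▸ hx) |>.2

lemma tight_sup (hF : Submodular F') (hw : w ∈ basePolytope n F') (hF0 : F' ∅ = 0)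
    {C : Finset (Fin n)} {T : Fin n → Finset (Fin n)}
    (hT : ∀ v ∈ C, TightAt F' w (T v)) : TightAt F' w (C.sup T) := by
  classical
  refine Finset.sup_induction (tight_empty hF0) (fun A hA B hB => ?_) hT
  exact (tight_inter_union hF hw hA hB).2

/-- The ℓ¹ discrepancy between the block sum of `z` and the target `a`. -/
def psi (n r : ℕ) (a : Fin n → ℝ) (z : Vec n r) : ℝ := ∑ v, |(∑ i, z i v) - a v|

variable {r : ℕ} {F : Fin r → Finset (Fin n) → ℝ}

lemma step (hsub : ∀ i, Submodular (F i)) (hnorm : ∀ i, F i ∅ = 0)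
    {ystar : Vec n r} (hstar : ∀ i, ystar i ∈ basePolytope n (F i))
    {z : Vec n r} (hz : ∀ i, z i ∈ basePolytope n (F i))
    (hpos : 0 < psi n r (fun v => ∑ i, ystar i v) z) :
    ∃ (z' : Vec n r) (ε : ℝ), 0 < ε ∧ (∀ i, z' i ∈ basePolytope n (F i)) ∧
      psi n r (fun v => ∑ i, ystar i v) z' = psi n r (fun v => ∑ i, ystar i v) z - 2 * ε ∧
      ∀ i x, |z' i x - z i x| ≤ ε := by
  classical
  set a : Fin n → ℝ := fun v => ∑ i, ystar i v with ha
  set surplus : Fin n → ℝ := fun v => (∑ i, z i v) - a v with hsurp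
  -- the total surplus is zero
  have hsum0 : ∑ v, surplus v = 0 := by
    have h1 : ∑ v, ∑ i, z i v = ∑ i, ∑ v, z i v := Finset.sum_comm
    have h2 : ∑ v, ∑ i, ystar i v = ∑ i, ∑ v, ystar i v := Finset.sum_comm
    simp only [hsurp, ha, Finset.sum_sub_distrib]
    rw [h1, h2]
    rw [Finset.sum_congr rfl (fun i _ => (hz i).2), Finset.sum_congr rfl (fun i _ => (hstar i).2)]
    ring
  -- there exist surplus and deficit vertices
  have hex : ∃ v₀, surplus v₀ ≠ 0 := by
    by_contra hall
    push_neg at hall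
    have : psi n r a z = 0 := by
      unfold psi
      refine Finset.sum_eq_zero fun v _ => ?_
      have := hall v
      simp only [hsurp] at this
      simp [this]
    rw [this] at hpos; exact lt_irrefl _ hpos
  obtain ⟨v₀, hv₀⟩ := hex
  have hexpos : ∃ u, 0 < surplus u := by
    obtain ⟨u, _, hu⟩ := Finset.exists_pos_of_sum_zero_of_exists_nonzero surplus hsum0
      ⟨v₀, Finset.mem_univ _, hv₀⟩
    exact ⟨u, hu⟩
  have hexneg : ∃ u, surplus u < 0 := by
    obtain ⟨u, _, hu⟩ := Finset.exists_pos_of_sum_zero_of_exists_nonzero (fun v => -surplus v)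
      (by simpa using hsum0) ⟨v₀, Finset.mem_univ _, by simpa using hv₀⟩
    exact ⟨u, by linarith⟩
  -- the exchange arc relation
  set arc : Fin n → Fin n → Prop := fun x y => x ≠ y ∧
    ∃ i, ∀ A, TightAt (F i) (z i) A → y ∈ A → x ∈ A with harcdef
  -- minimal tight sets
  have hD := fun (i : Fin r) (v : Fin n) => exists_min_tight (hsub i) (hz i) v
  set D : Fin r → Fin n → Finset (Fin n) := fun i v => (hD i v).choose with hDdef
  have hDspec : ∀ i v, TightAt (F i) (z i) (D i v) ∧ v ∈ D i v ∧
      ∀ A, TightAt (F i) (z i) A → v ∈ A → D i v ⊆ A := fun i v => (hD i v).choose_spec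
  -- KEY CLAIM: an augmenting path exists
  have hpath : ∃ x y, 0 < surplus x ∧ surplus y < 0 ∧ Relation.ReflTransGen arc x y := by
    by_contra hcon
    push_neg at hcon
    set Reach : Set (Fin n) := {x | ∃ u, 0 < surplus u ∧ Relation.ReflTransGen arc u x}
      with hReach
    set C : Finset (Fin n) := Finset.univ.filter (fun x => x ∉ Reach) with hC
    -- minimal tight sets of elements of C stay in C
    have hDC : ∀ v ∈ C, ∀ i, D i v ⊆ C := by
      intro v hv i x hx
      simp only [hC, Finset.mem_filter, Finset.mem_univ, true_and] at hv ⊢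
      intro hxR
      apply hv
      obtain ⟨u, hu, hru⟩ := hxR
      have hxv : x ≠ v := by
        rintro rfl
        exact hv ⟨u, hu, hru⟩
      have harc : arc x v := ⟨hxv, i, fun A hA hvA => (hDspec i v).2.2 A hA hvA hx⟩
      exact ⟨u, hu, hru.tail harc⟩
    -- C is tight for every block
    have hCtight : ∀ i, TightAt (F i) (z i) C := by
      intro i
      have hCeq : C = C.sup (fun v => D i v) := by
        apply Finset.Subset.antisymm
        · intro v hv
          exact Finset.mem_sup.mpr ⟨v, hv, (hDspec i v).2.1⟩
        · exact Finset.sup_le fun v hv => hDC v hv i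
      rw [hCeq]
      exact tight_sup (hsub i) (hz i) (hnorm i) (fun v _ => (hDspec i v).1)
    -- hence the surplus of C is nonnegative
    have hCsurp : 0 ≤ ∑ v ∈ C, surplus v := by
      have h1 : ∑ v ∈ C, surplus v = ∑ i, (∑ v ∈ C, z i v) - ∑ i, (∑ v ∈ C, ystar i v) := by
        simp only [hsurp, ha, Finset.sum_sub_distrib]
        rw [Finset.sum_comm (s := C), Finset.sum_comm (s := C)]
      rw [h1]
      have h2 : ∑ i, (∑ v ∈ C, z i v) = ∑ i, F i C :=
        Finset.sum_congr rfl (fun i _ => hCtight i)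
      have h3 : ∑ i, (∑ v ∈ C, ystar i v) ≤ ∑ i, F i C :=
        Finset.sum_le_sum (fun i _ => (hstar i).1 C)
      rw [h2]; linarith
    -- but C contains a deficit vertex and no surplus vertex
    obtain ⟨vneg, hvneg⟩ := hexneg
    have hvnegC : vneg ∈ C := by
      simp only [hC, Finset.mem_filter, Finset.mem_univ, true_and]
      rintro ⟨u, hu, hru⟩
      exact hcon u vneg hu hvneg hru
    have hCnonpos : ∀ v ∈ C, surplus v ≤ 0 := by
      intro v hv
      simp only [hC, Finset.mem_filter, Finset.mem_univ, true_and] at hv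
      by_contra hpos'
      push_neg at hpos'
      exact hv ⟨v, hpos', Relation.ReflTransGen.refl⟩
    have : ∑ v ∈ C, surplus v < 0 := by
      have := Finset.sum_lt_sum (f := surplus) (g := fun _ => (0:ℝ))
        (fun v hv => hCnonpos v hv) ⟨vneg, hvnegC, hvneg⟩
      simpa using this
    linarith
  -- extract a simple path
  obtain ⟨u0, vK, hu0, hvK, hrtg⟩ := hpath
  letI : Inhabited (Fin n) := ⟨u0⟩
  have hune : u0 ≠ vK := by rintro rfl; linarith
  obtain ⟨l, hcc, hlast, hnd⟩ := exists_nodup_chain hrtg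
  obtain ⟨k, f, hk, hf0, hfk, harc, hinj⟩ := chain_to_fun hcc hlast hnd hune
  -- choose blocks realizing each arc
  have hbex : ∀ j, j < k → ∃ i, ∀ A, TightAt (F i) (z i) A → f (j+1) ∈ A → f j ∈ A :=
    fun j hj => (harc j hj).2
  have hrne : Nonempty (Fin r) := by
    rcases isEmpty_or_nonempty (Fin r) with hre | hre
    · exfalso; apply hv₀; simp [hsurp, ha, Finset.univ_eq_empty]
    · exact hre
  set b : ℕ → Fin r := fun j => if h : j < k then (hbex j h).choose else Classical.arbitrary _
    with hbdef
  have hb : ∀ j (h : j < k), ∀ A, TightAt (F (b j)) (z (b j)) A → f (j+1) ∈ A → f j ∈ A := by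
    intro j h
    have hbj : b j = (hbex j h).choose := by rw [hbdef]; exact dif_pos h
    rw [hbj]
    exact (hbex j h).choose_spec
  -- the movement direction
  set m : Fin r → Fin n → ℝ := fun i x => ∑ j ∈ Finset.range k,
    if b j = i then ((if x = f (j+1) then (1:ℝ) else 0) - (if x = f j then 1 else 0)) else 0
    with hmdef
  have hmval : ∀ i (A : Finset (Fin n)), ∑ x ∈ A, m i x = ∑ j ∈ Finset.range k,
      (if b j = i then ((if f (j+1) ∈ A then (1:ℝ) else 0) - (if f j ∈ A then 1 else 0))
        else 0) := by
    intro i A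
    simp only [hmdef]
    rw [Finset.sum_comm]
    refine Finset.sum_congr rfl fun j _ => ?_
    by_cases hbj : b j = i
    · simp only [hbj, if_true]
      rw [Finset.sum_sub_distrib, Finset.sum_ite_eq' A (f (j+1)) (fun _ => (1:ℝ)),
        Finset.sum_ite_eq' A (f j) (fun _ => (1:ℝ))]
    · simp [hbj]
  have hmuniv : ∀ i, ∑ x, m i x = 0 := by
    intro i
    rw [hmval i Finset.univ]
    exact Finset.sum_eq_zero fun j _ => by simp
  have hmtight : ∀ i A, TightAt (F i) (z i) A → ∑ x ∈ A, m i x ≤ 0 := by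
    intro i A hA
    rw [hmval i A]
    refine Finset.sum_nonpos fun j hj => ?_
    rw [Finset.mem_range] at hj
    by_cases hbj : b j = i
    · rw [if_pos hbj]
      by_cases h1 : f (j+1) ∈ A
      · have h2 : f j ∈ A := hb j hj A (by rw [hbj]; exact hA) h1
        simp [h1, h2]
      · by_cases h2 : f j ∈ A <;> simp [h1, h2]
    · simp [hbj]
  have hmabs : ∀ i A, |∑ x ∈ A, m i x| ≤ (k:ℝ) := by
    intro i A
    rw [hmval i A]
    calc |∑ j ∈ Finset.range k, (if b j = i then
            ((if f (j+1) ∈ A then (1:ℝ) else 0) - (if f j ∈ A then 1 else 0)) else 0)|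
        ≤ ∑ j ∈ Finset.range k, |(if b j = i then
            ((if f (j+1) ∈ A then (1:ℝ) else 0) - (if f j ∈ A then 1 else 0)) else 0)| :=
          Finset.abs_sum_le_sum_abs _ _
      _ ≤ ∑ _j ∈ Finset.range k, (1:ℝ) := by
          refine Finset.sum_le_sum fun j _ => ?_
          split_ifs <;> norm_num
      _ = (k:ℝ) := by simp
  have hmcol : ∀ x, ∑ i, m i x
      = (if x = f k then (1:ℝ) else 0) - (if x = f 0 then 1 else 0) := by
    intro x
    simp only [hmdef]
    rw [Finset.sum_comm]
    have hstep : ∀ j ∈ Finset.range k, (∑ i, if b j = i then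
        ((if x = f (j+1) then (1:ℝ) else 0) - (if x = f j then 1 else 0)) else 0)
        = ((if x = f (j+1) then (1:ℝ) else 0) - (if x = f j then 1 else 0)) := by
      intro j _
      rw [Finset.sum_ite_eq Finset.univ (b j)
        (fun _ => ((if x = f (j+1) then (1:ℝ) else 0) - (if x = f j then 1 else 0)))]
      simp
    rw [Finset.sum_congr rfl hstep,
      Finset.sum_range_sub (fun j => if x = f j then (1:ℝ) else 0)]
  have hmone : ∀ i x, |m i x| ≤ 1 := by
    intro i x
    have hsplit : m i x = (∑ j ∈ Finset.range k, if b j = i ∧ x = f (j+1) then (1:ℝ) else 0)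
        - (∑ j ∈ Finset.range k, if b j = i ∧ x = f j then (1:ℝ) else 0) := by
      simp only [hmdef]
      rw [← Finset.sum_sub_distrib]
      refine Finset.sum_congr rfl fun j _ => ?_
      by_cases h1 : b j = i <;> by_cases h2 : x = f (j+1) <;> by_cases h3 : x = f j <;>
        simp [h1, h2, h3]
    have key : ∀ (s : ℕ), (∀ j j', j < k → j' < k → f (j+s) = f (j'+s) → j = j') →
        (∑ j ∈ Finset.range k, if b j = i ∧ x = f (j+s) then (1:ℝ) else 0) ≤ 1 := by
      intro s hs
      by_cases hex : ∃ j₀ ∈ Finset.range k, x = f (j₀+s)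
      · obtain ⟨j₀, hj₀, hx⟩ := hex
        calc (∑ j ∈ Finset.range k, if b j = i ∧ x = f (j+s) then (1:ℝ) else 0)
            ≤ ∑ j ∈ Finset.range k, if x = f (j+s) then (1:ℝ) else 0 := by
              refine Finset.sum_le_sum fun j _ => ?_
              by_cases h1 : b j = i <;> by_cases h2 : x = f (j+s) <;> simp [h1, h2]
          _ = 1 := by
              rw [Finset.sum_eq_single_of_mem j₀ hj₀]
              · simp [hx]
              · intro j hj hne
                rw [Finset.mem_range] at hj hj₀
                have : x = f (j+s) → j = j₀ := fun h2 => hs j j₀ hj hj₀ (by rw [← h2, ← hx])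
                by_cases h2 : x = f (j+s)
                · exact absurd (this h2) hne
                · simp [h2]
      · push_neg at hex
        have : (∑ j ∈ Finset.range k, if b j = i ∧ x = f (j+s) then (1:ℝ) else 0) = 0 :=
          Finset.sum_eq_zero fun j hj => by simp [hex j hj]
        rw [this]; norm_num
    have hP1 := key 1 (fun j j' hj hj' he => by
      have := hinj (j+1) (j'+1) (by omega) (by omega) he; omega)
    have hQ1 := key 0 (fun j j' hj hj' he => by
      have := hinj (j+0) (j'+0) (by omega) (by omega) he; omega)
    have hQ1' : (∑ j ∈ Finset.range k, if b j = i ∧ x = f j then (1:ℝ) else 0) ≤ 1 := by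
      simpa using hQ1
    have hP0 : 0 ≤ (∑ j ∈ Finset.range k, if b j = i ∧ x = f (j+1) then (1:ℝ) else 0) :=
      Finset.sum_nonneg fun j _ => by split_ifs <;> norm_num
    have hQ0 : 0 ≤ (∑ j ∈ Finset.range k, if b j = i ∧ x = f j then (1:ℝ) else 0) :=
      Finset.sum_nonneg fun j _ => by split_ifs <;> norm_num
    have hP1' : (∑ j ∈ Finset.range k, if b j = i ∧ x = f (j+1) then (1:ℝ) else 0) ≤ 1 := hP1
    rw [hsplit, abs_le]
    constructor <;> linarith
  -- slack
  set T : Finset (Fin r × Finset (Fin n)) :=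
    Finset.univ.filter (fun p => ∑ x ∈ p.2, z p.1 x < F p.1 p.2) with hTdef
  set δ : ℝ := if hT : T.Nonempty then T.inf' hT (fun p => F p.1 p.2 - ∑ x ∈ p.2, z p.1 x)
    else 1 with hδdef
  have hδpos : 0 < δ := by
    rw [hδdef]
    split_ifs with hT
    · rw [Finset.lt_inf'_iff]
      intro p hp
      rw [hTdef, Finset.mem_filter] at hp
      linarith [hp.2]
    · norm_num
  have hδle : ∀ i A, ¬ TightAt (F i) (z i) A → δ ≤ F i A - ∑ x ∈ A, z i x := by
    intro i A hA
    have hlt : ∑ x ∈ A, z i x < F i A := lt_of_le_of_ne ((hz i).1 A) hA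
    have hmem : (i, A) ∈ T := by rw [hTdef, Finset.mem_filter]; exact ⟨Finset.mem_univ _, hlt⟩
    have hT : T.Nonempty := ⟨_, hmem⟩
    rw [hδdef, dif_pos hT]
    exact Finset.inf'_le _ hmem
  set ε : ℝ := min (min (surplus (f 0)) (-(surplus (f k)))) (δ / (k+1)) with hεdef
  have hu0' : 0 < surplus (f 0) := by rw [hf0]; exact hu0
  have hvK' : surplus (f k) < 0 := by rw [hfk]; exact hvK
  have hεpos : 0 < ε := by
    rw [hεdef]
    exact lt_min (lt_min hu0' (by linarith)) (by positivity)
  have hε1 : ε ≤ surplus (f 0) := le_trans (min_le_left _ _) (min_le_left _ _)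
  have hε2 : ε ≤ -(surplus (f k)) := le_trans (min_le_left _ _) (min_le_right _ _)
  have hε3 : ε ≤ δ / ((k:ℝ)+1) := min_le_right _ _
  have hεk : ε * (k:ℝ) ≤ δ := by
    have h1 : ε * (k:ℝ) ≤ (δ / ((k:ℝ)+1)) * (k:ℝ) := by
      apply mul_le_mul_of_nonneg_right hε3 (by positivity)
    have h2 : (δ / ((k:ℝ)+1)) * (k:ℝ) ≤ δ := by
      rw [div_mul_eq_mul_div, div_le_iff₀ (by positivity)]
      nlinarith
    linarith
  -- the new point
  set z' : Vec n r := WithLp.toLp 2 (fun i => WithLp.toLp 2 (fun x => z i x + ε * m i x) : ∀ _ : Fin r, EuclideanSpace ℝ (Fin n))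
    with hz'def
  have hz'' : ∀ i x, z' i x = z i x + ε * m i x := fun i x => rfl
  have hsum' : ∀ i (A : Finset (Fin n)), ∑ x ∈ A, z' i x
      = ∑ x ∈ A, z i x + ε * ∑ x ∈ A, m i x := by
    intro i A
    rw [Finset.mul_sum, ← Finset.sum_add_distrib]
  refine ⟨z', ε, hεpos, ?_, ?_, ?_⟩
  · intro i
    constructor
    · intro A
      rw [hsum']
      by_cases hA : TightAt (F i) (z i) A
      · have h1 := hmtight i A hA
        have h2 : ε * ∑ x ∈ A, m i x ≤ 0 :=
          mul_nonpos_iff.mpr (Or.inl ⟨le_of_lt hεpos, h1⟩)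
        have h3 : ∑ x ∈ A, z i x = F i A := hA
        linarith
      · have h1 := hδle i A hA
        have h2 : ∑ x ∈ A, m i x ≤ (k:ℝ) := le_trans (le_abs_self _) (hmabs i A)
        have h3 : ε * ∑ x ∈ A, m i x ≤ ε * (k:ℝ) :=
          mul_le_mul_of_nonneg_left h2 (le_of_lt hεpos)
        linarith
    · rw [hsum' i Finset.univ, hmuniv i, (hz i).2]; ring
  · have hne0k : f 0 ≠ f k := fun h => by
      have := hinj 0 k (by omega) (le_refl k) h; omega
    have hcol : ∀ x, (∑ i, z' i x) = (∑ i, z i x)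
        + ε * ((if x = f k then (1:ℝ) else 0) - (if x = f 0 then 1 else 0)) := by
      intro x
      have : ∑ i, z' i x = ∑ i, (z i x + ε * m i x) := rfl
      rw [this, Finset.sum_add_distrib, ← Finset.mul_sum, hmcol x]
    unfold psi
    have hterm : ∀ x, |(∑ i, z' i x) - a x|
        = |(∑ i, z i x) - a x| - (if x = f 0 then ε else 0) - (if x = f k then ε else 0) := by
      intro x
      rw [hcol x]
      have hsx : (∑ i, z i x) - a x = surplus x := rfl
      by_cases h0 : x = f 0
      · have hxk : x ≠ f k := by rw [h0]; exact hne0k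
        rw [if_pos h0, if_neg hxk, if_pos h0, if_neg hxk]
        have hs0 : surplus x = surplus (f 0) := by rw [h0]
        have e1 : (∑ i, z i x) + ε * ((0:ℝ) - 1) - a x = surplus x - ε := by
          rw [← hsx]; ring
        rw [e1]
        rw [abs_of_nonneg (by rw [hs0]; linarith), hsx, abs_of_pos (by rw [hs0]; linarith)]
        ring
      · by_cases hk' : x = f k
        · rw [if_pos hk', if_neg h0, if_pos hk', if_neg h0]
          have hs0 : surplus x = surplus (f k) := by rw [hk']
          have e1 : (∑ i, z i x) + ε * ((1:ℝ) - 0) - a x = surplus x + ε := by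
            rw [← hsx]; ring
          rw [e1]
          rw [abs_of_nonpos (by rw [hs0]; linarith), hsx,
            abs_of_neg (by rw [hs0]; linarith)]
          ring
        · rw [if_neg hk', if_neg h0, if_neg hk', if_neg h0]
          have e1 : (∑ i, z i x) + ε * ((0:ℝ) - 0) - a x = (∑ i, z i x) - a x := by ring
          rw [e1]; ring
    rw [Finset.sum_congr rfl (fun x _ => hterm x)]
    rw [Finset.sum_sub_distrib, Finset.sum_sub_distrib]
    rw [Finset.sum_ite_eq' Finset.univ (f 0) (fun _ => ε),
      Finset.sum_ite_eq' Finset.univ (f k) (fun _ => ε)]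
    simp only [Finset.mem_univ, if_true]
    ring
  · intro i x
    rw [hz'']
    have e1 : z i x + ε * m i x - z i x = ε * m i x := by ring
    rw [e1, abs_mul, abs_of_pos hεpos]
    calc ε * |m i x| ≤ ε * 1 := mul_le_mul_of_nonneg_left (hmone i x) (le_of_lt hεpos)
      _ = ε := mul_one ε


lemma norm_sq_vec (z : Vec n r) : ‖z‖^2 = ∑ i, ∑ v, (z i v)^2 := by
  rw [PiLp.norm_sq_eq_of_L2]
  refine Finset.sum_congr rfl fun i _ => ?_
  rw [PiLp.norm_sq_eq_of_L2]
  exact Finset.sum_congr rfl fun v _ => by simp [Real.norm_eq_abs, sq_abs]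

lemma psi_nonneg (a : Fin n → ℝ) (z : Vec n r) : 0 ≤ psi n r a z :=
  Finset.sum_nonneg fun v _ => abs_nonneg _

lemma psi_continuous (a : Fin n → ℝ) : Continuous fun z : Vec n r => psi n r a z := by
  unfold psi
  refine continuous_finset_sum _ fun v _ => Continuous.abs ?_
  exact Continuous.sub
    (continuous_finset_sum _ fun i _ => (PiLp.continuous_apply 2 _ v).comp (PiLp.continuous_apply 2 _ i))
    continuous_const

/-- The movement lemma: there is a feasible point with block sum equal to that of `ystar`
whose every coordinate moved from `y` by at most the ℓ¹-discrepancy of `y`. -/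
lemma movement (hsub : ∀ i, Submodular (F i)) (hnorm : ∀ i, F i ∅ = 0)
    {y ystar : Vec n r} (hy : ∀ i, y i ∈ basePolytope n (F i))
    (hstar : ∀ i, ystar i ∈ basePolytope n (F i)) :
    ∃ z : Vec n r, (∀ i, z i ∈ basePolytope n (F i)) ∧
      (∀ v, ∑ i, z i v = ∑ i, ystar i v) ∧
      (∀ i v, |z i v - y i v| ≤ psi n r (fun v => ∑ i, ystar i v) y) := by
  classical
  set a : Fin n → ℝ := fun v => ∑ i, ystar i v with ha
  set M : ℝ := psi n r a y with hM
  set P : Set (Vec n r) := {z | (∀ i, z i ∈ basePolytope n (F i)) ∧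
    ∀ i v, |z i v - y i v| + psi n r a z ≤ M} with hP
  have hyP : y ∈ P := by
    refine ⟨hy, fun i v => ?_⟩
    simp [hM]
  have hclosed : IsClosed P := by
    have h1 : IsClosed {z : Vec n r | ∀ i, z i ∈ basePolytope n (F i)} := by
      have : {z : Vec n r | ∀ i, z i ∈ basePolytope n (F i)} =
          ⋂ i, ((⋂ A : Finset (Fin n), {z : Vec n r | ∑ v ∈ A, z i v ≤ F i A}) ∩
            {z : Vec n r | ∑ v, z i v = F i Finset.univ}) := by
        ext z
        simp only [Set.mem_setOf_eq, Set.mem_iInter, Set.mem_inter_iff]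
        constructor
        · exact fun h i => ⟨fun A => (h i).1 A, (h i).2⟩
        · exact fun h i => ⟨fun A => (h i).1 A, (h i).2⟩
      rw [this]
      refine isClosed_iInter fun i => IsClosed.inter (isClosed_iInter fun A => ?_) ?_
      · exact isClosed_le (continuous_finset_sum _ fun v _ =>
          (PiLp.continuous_apply 2 _ v).comp (PiLp.continuous_apply 2 _ i)) continuous_const
      · exact isClosed_eq (continuous_finset_sum _ fun v _ =>
          (PiLp.continuous_apply 2 _ v).comp (PiLp.continuous_apply 2 _ i)) continuous_const
    have h2 : IsClosed {z : Vec n r | ∀ i v, |z i v - y i v| + psi n r a z ≤ M} := by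
      have : {z : Vec n r | ∀ i v, |z i v - y i v| + psi n r a z ≤ M} =
          ⋂ i, ⋂ v, {z : Vec n r | |z i v - y i v| + psi n r a z ≤ M} := by
        ext z; simp [Set.mem_iInter]
      rw [this]
      refine isClosed_iInter fun i => isClosed_iInter fun v => ?_
      refine isClosed_le (Continuous.add (Continuous.abs ?_) (psi_continuous a)) continuous_const
      exact Continuous.sub ((PiLp.continuous_apply 2 _ v).comp (PiLp.continuous_apply 2 _ i)) continuous_const
    have : P = _ ∩ _ := rfl
    exact IsClosed.inter h1 h2
  have hMnn : 0 ≤ M := psi_nonneg a y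
  have hbdd : Bornology.IsBounded P := by
    refine (Metric.isBounded_iff_subset_closedBall y).mpr ⟨Real.sqrt (n*r) * M, fun z hz => ?_⟩
    have hzb : ∀ i v, |z i v - y i v| ≤ M := by
      intro i v
      have := hz.2 i v
      have hnn := psi_nonneg a z
      linarith
    have hsq : ‖z - y‖^2 ≤ (n*r) * M^2 := by
      rw [norm_sq_vec]
      calc ∑ i, ∑ v, ((z - y) i v)^2 ≤ ∑ _i : Fin r, ∑ _v : Fin n, M^2 := by
            refine Finset.sum_le_sum fun i _ => Finset.sum_le_sum fun v _ => ?_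
            have h1 : |(z - y) i v| ≤ M := hzb i v
            calc ((z - y) i v)^2 = |(z - y) i v|^2 := (sq_abs _).symm
              _ ≤ M^2 := by nlinarith [abs_nonneg ((z - y) i v)]
        _ = (n*r) * M^2 := by simp [Finset.sum_const]; ring
    rw [Metric.mem_closedBall, dist_eq_norm]
    have h1 : ‖z - y‖ = Real.sqrt (‖z - y‖^2) := (Real.sqrt_sq (norm_nonneg _)).symm
    rw [h1]
    calc Real.sqrt (‖z - y‖^2) ≤ Real.sqrt ((n*r) * M^2) := Real.sqrt_le_sqrt hsq
      _ = Real.sqrt (n*r) * M := by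
          rw [Real.sqrt_mul (by positivity), Real.sqrt_sq hMnn]
  have hcomp : IsCompact P := Metric.isCompact_of_isClosed_isBounded hclosed hbdd
  obtain ⟨z₀, hz₀P, hz₀min⟩ := hcomp.exists_isMinOn ⟨y, hyP⟩
    ((psi_continuous a).continuousOn)
  have hz₀feas : ∀ i, z₀ i ∈ basePolytope n (F i) := hz₀P.1
  have hz₀zero : psi n r a z₀ = 0 := by
    by_contra hne
    have hpos : 0 < psi n r a z₀ := lt_of_le_of_ne (psi_nonneg a z₀) (Ne.symm hne)
    obtain ⟨z', ε, hεpos, hz'feas, hz'psi, hz'move⟩ := step hsub hnorm hstar hz₀feas hpos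
    rw [← ha] at hz'psi
    have hz'P : z' ∈ P := by
      refine ⟨hz'feas, fun i v => ?_⟩
      have h1 : |z' i v - y i v| ≤ |z' i v - z₀ i v| + |z₀ i v - y i v| := by
        calc |z' i v - y i v| = |(z' i v - z₀ i v) + (z₀ i v - y i v)| := by ring_nf
          _ ≤ _ := abs_add_le _ _
      have h2 := hz'move i v
      have h3 := hz₀P.2 i v
      rw [hz'psi]
      linarith
    have h9 : psi n r a z₀ ≤ psi n r a z' := hz₀min hz'P
    rw [hz'psi] at h9
    linarith
  refine ⟨z₀, hz₀feas, ?_, ?_⟩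
  · intro v
    have : ∀ v ∈ Finset.univ, |(∑ i, z₀ i v) - a v| = 0 := by
      intro v _
      have h1 := Finset.sum_eq_zero_iff_of_nonneg
        (fun x (_ : x ∈ Finset.univ) => abs_nonneg ((∑ i, z₀ i x) - a x)) |>.mp hz₀zero
      exact h1 v (Finset.mem_univ v)
    have h2 := this v (Finset.mem_univ v)
    have h3 : (∑ i, z₀ i v) - a v = 0 := abs_eq_zero.mp h2
    simp only [ha] at h3
    linarith
  · intro i v
    have := hz₀P.2 i v
    rw [hz₀zero] at this
    simpa using this

end Aux

set_option maxHeartbeats 1000000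

/-- For `y ∈ 𝒴` and `y*` an optimal solution of (Prox-DSM) closest to `y`,
`⟨∇g(y), y* - y⟩ ≤ -(2/(n²r))‖y - y*‖²`. -/
theorem statement8 (n r : ℕ) (hn : 1 ≤ n) (hr : 1 ≤ r)
    (F : Fin r → Finset (Fin n) → ℝ)
    (hsub : ∀ i, Submodular (F i)) (hnorm : ∀ i, F i ∅ = 0)
    (y ystar : Vec n r) (hy : y ∈ feas n r F)
    (hopt : IsOptimal n r F ystar)
    (hclosest : ∀ z : Vec n r, IsOptimal n r F z → ‖y - ystar‖ ≤ ‖y - z‖) :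
    ⟪gradg n r y, ystar - y⟫ ≤ -(2 / ((n : ℝ) ^ 2 * r)) * ‖y - ystar‖ ^ 2 := by
  classical
  set S : EuclideanSpace ℝ (Fin n) := ∑ i, y i with hS
  set A : EuclideanSpace ℝ (Fin n) := ∑ i, ystar i with hA
  set D : EuclideanSpace ℝ (Fin n) := S - A with hD
  have hfeasStar : ∀ i, ystar i ∈ basePolytope n (F i) := hopt.1
  have hyfeas : ∀ i, y i ∈ basePolytope n (F i) := hy
  -- (1) the inner product equals 2⟪S, A - S⟫
  have hlhs : ⟪gradg n r y, ystar - y⟫ = 2 * ⟪S, A - S⟫ := by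
    rw [PiLp.inner_apply]
    have h1 : ∀ i : Fin r, ⟪gradg n r y i, (ystar - y) i⟫ = 2 * ⟪S, ystar i - y i⟫ := by
      intro i
      have h2 : gradg n r y i = (2:ℝ) • S := rfl
      have h3 : (ystar - y) i = ystar i - y i := rfl
      rw [h2, h3, real_inner_smul_left]
    rw [Finset.sum_congr rfl (fun i _ => h1 i), ← Finset.mul_sum, ← inner_sum]
    congr 1
    rw [Finset.sum_sub_distrib]
  -- (2) first-order optimality of ystar
  have hc : 0 ≤ ⟪A, D⟫ := by
    by_contra hneg
    push_neg at hneg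
    have hDne : D ≠ 0 := by
      intro h
      rw [h, inner_zero_right] at hneg
      exact lt_irrefl _ hneg
    have hDpos : 0 < ‖D‖^2 := pow_pos (norm_pos_iff.mpr hDne) 2
    set c : ℝ := ⟪A, D⟫ with hcdef
    set t : ℝ := min 1 (-c / ‖D‖^2) with ht
    have ht0 : 0 < t := lt_min one_pos (div_pos (by linarith) hDpos)
    have ht1 : t ≤ 1 := min_le_left _ _
    have htD : t * ‖D‖^2 ≤ -c := by
      have h1 : t ≤ -c / ‖D‖^2 := min_le_right _ _
      rw [le_div_iff₀ hDpos] at h1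
      exact h1
    set yt : Vec n r := ystar + t • (y - ystar) with hyt
    have hytfeas : yt ∈ feas n r F := by
      intro i
      have hptw : ∀ v, yt i v = ystar i v + t * (y i v - ystar i v) := fun v => rfl
      constructor
      · intro B
        have hsum : ∑ v ∈ B, yt i v
            = (1-t) * ∑ v ∈ B, ystar i v + t * ∑ v ∈ B, y i v := by
          rw [Finset.sum_congr rfl (fun v _ => hptw v), Finset.sum_add_distrib,
            ← Finset.mul_sum, Finset.sum_sub_distrib]
          try ring
        rw [hsum]
        have h1 := (hfeasStar i).1 B
        have h2 := (hyfeas i).1 B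
        nlinarith
      · have hsum : ∑ v, yt i v = (1-t) * ∑ v, ystar i v + t * ∑ v, y i v := by
          rw [Finset.sum_congr rfl (fun v (_ : v ∈ Finset.univ) => hptw v),
            Finset.sum_add_distrib, ← Finset.mul_sum, Finset.sum_sub_distrib]
          ring
        rw [hsum, (hfeasStar i).2, (hyfeas i).2]
        ring
    have hsumyt : ∑ i, yt i = A + t • D := by
      have h1 : ∀ i ∈ Finset.univ, yt i = ystar i + t • (y i - ystar i) := fun _ _ => rfl
      rw [Finset.sum_congr rfl h1, Finset.sum_add_distrib, ← Finset.smul_sum,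
        Finset.sum_sub_distrib]
      try rfl
    have hgyt : g n r yt = ‖A‖^2 + 2*(t*c) + t^2*‖D‖^2 := by
      unfold g
      rw [hsumyt, norm_add_sq_real, real_inner_smul_right, norm_smul]
      simp only [Real.norm_eq_abs]
      try rw [mul_pow, sq_abs]
      try ring
    have hgstar : g n r ystar = ‖A‖^2 := by unfold g; rw [← hA]
    have hle := hopt.2 yt hytfeas
    rw [hgyt, hgstar] at hle
    nlinarith
  -- (3) LHS ≤ -2‖D‖²
  have hkey : ⟪gradg n r y, ystar - y⟫ ≤ -2 * ‖D‖^2 := by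
    rw [hlhs]
    have h1 : A - S = -D := by rw [hD]; abel
    have h2 : S = A + D := by rw [hD]; abel
    have h3 : ⟪S, A - S⟫ = -(⟪A, D⟫ + ‖D‖^2) := by
      rw [h1, inner_neg_right]
      nth_rewrite 1 [h2]
      rw [inner_add_left, real_inner_self_eq_norm_sq]
    rw [h3]
    linarith
  -- (4) movement lemma and optimality of the resulting z
  obtain ⟨z, hzfeas, hzsum, hzmove⟩ := Aux.movement hsub hnorm hyfeas hfeasStar
  have hzsumvec : ∑ i, z i = A := by
    ext v
    rw [WithLp.ofLp_sum, Finset.sum_apply v Finset.univ (fun i => (z i).ofLp), hzsum v, hA]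
    rw [WithLp.ofLp_sum, Finset.sum_apply]
  have hzopt : IsOptimal n r F z := by
    refine ⟨hzfeas, fun w hw => ?_⟩
    have hgz : g n r z = g n r ystar := by
      unfold g; rw [hzsumvec, ← hA]
    rw [hgz]
    exact hopt.2 w hw
  -- (5) numeric estimates
  set M : ℝ := Aux.psi n r (fun v => ∑ i, ystar i v) y with hM
  have hMnn : 0 ≤ M := Finset.sum_nonneg fun v _ => abs_nonneg _
  have hDsq : ‖D‖^2 = ∑ v, (S v - A v)^2 := by
    rw [PiLp.norm_sq_eq_of_L2]
    refine Finset.sum_congr rfl fun v _ => ?_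
    have : D v = S v - A v := rfl
    rw [this]
    simp [Real.norm_eq_abs, sq_abs]
  have hM2 : M^2 ≤ n * ‖D‖^2 := by
    have h1 : M = ∑ v, |S v - A v| := by
      rw [hM]
      unfold Aux.psi
      refine Finset.sum_congr rfl fun v _ => ?_
      have e1 : S v = ∑ i, y i v := by rw [hS, WithLp.ofLp_sum, Finset.sum_apply]
      have e2 : A v = ∑ i, ystar i v := by rw [hA, WithLp.ofLp_sum, Finset.sum_apply]
      simp [e1, e2]
    rw [h1, hDsq]
    calc (∑ v, |S v - A v|)^2
        ≤ (Finset.univ : Finset (Fin n)).card * ∑ v, |S v - A v|^2 :=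
          sq_sum_le_card_mul_sum_sq
      _ = n * ∑ v, (S v - A v)^2 := by
          simp [sq_abs, Finset.card_univ]
  have hyz : ‖y - z‖^2 ≤ (n*r) * M^2 := by
    rw [Aux.norm_sq_vec]
    calc ∑ i, ∑ v, ((y - z) i v)^2 ≤ ∑ _i : Fin r, ∑ _v : Fin n, M^2 := by
          refine Finset.sum_le_sum fun i _ => Finset.sum_le_sum fun v _ => ?_
          have h1 : (y - z) i v = y i v - z i v := rfl
          have h2 : |z i v - y i v| ≤ M := hzmove i v
          rw [h1]
          have h3 : |y i v - z i v| ≤ M := by rwa [abs_sub_comm]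
          calc (y i v - z i v)^2 = |y i v - z i v|^2 := (sq_abs _).symm
            _ ≤ M^2 := by nlinarith [abs_nonneg (y i v - z i v)]
      _ = (n*r) * M^2 := by simp [Finset.sum_const, Finset.card_univ]; ring
  have hyystar : ‖y - ystar‖^2 ≤ ‖y - z‖^2 := by
    have h1 := hclosest z hzopt
    nlinarith [norm_nonneg (y - z), norm_nonneg (y - ystar)]
  have hfin : ‖y - ystar‖^2 ≤ (n:ℝ)^2 * r * ‖D‖^2 := by
    have hnr0 : (0:ℝ) ≤ (n:ℝ)*r := by positivity
    calc ‖y - ystar‖^2 ≤ (n*r) * M^2 := le_trans hyystar hyz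
      _ ≤ (n*r) * (n * ‖D‖^2) := mul_le_mul_of_nonneg_left hM2 hnr0
      _ = (n:ℝ)^2 * r * ‖D‖^2 := by ring
  have hn1 : (1:ℝ) ≤ (n:ℝ) := by exact_mod_cast hn
  have hr1 : (1:ℝ) ≤ (r:ℝ) := by exact_mod_cast hr
  have hnr : (0:ℝ) < (n:ℝ)^2 * r := by nlinarith
  calc ⟪gradg n r y, ystar - y⟫ ≤ -2 * ‖D‖^2 := hkey
    _ ≤ -(2 / ((n : ℝ) ^ 2 * r)) * ‖y - ystar‖ ^ 2 := by
        have h1 : (2 / ((n:ℝ)^2*r)) * ‖y - ystar‖^2 ≤ 2 * ‖D‖^2 := by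
          rw [div_mul_eq_mul_div, div_le_iff₀ hnr]
          nlinarith
        linarith
end
end

section
/- Let y ∈ 𝒴, let y* be an optimal solution of (Prox-DSM) closest to y, and let g* be the optimal value of (Prox-DSM). Then ⟨∇g(y), y* − y⟩ ≤ −(2/(n²r + 1)) ( g(y) − g* + ‖y − y*‖² ). -/
open scoped RealInnerProductSpace Pointwise

noncomputable section

namespace Stmt9

open Finset

theorem exists_nodup_chain {α : Type*} {rel : α → α → Prop} {a b : α}
    (h : Relation.ReflTransGen rel a b) :
    ∃ l, List.Chain rel a l ∧ List.getLast (a :: l) (List.cons_ne_nil _ _) = b ∧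
      (a :: l).Nodup := by
  classical
  induction h using Relation.ReflTransGen.head_induction_on with
  | refl => exact ⟨[], List.Chain.nil, rfl, List.nodup_singleton b⟩
  | @head a' c hac hcb ih =>
    obtain ⟨l, hchain, hlast, hnodup⟩ := ih
    by_cases hmem : a' ∈ (c :: l)
    · obtain ⟨s, t, hst⟩ := List.append_of_mem hmem
      have hsuff : (a' :: t) <:+ (c :: l) := ⟨s, hst.symm⟩
      have hchain2 : List.Chain' rel (a' :: c :: l) := List.isChain_cons_cons.mpr ⟨hac, hchain⟩
      have hchain' : List.Chain' rel (a' :: t) :=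
        hchain2.suffix (hsuff.trans ((c :: l).suffix_cons a'))
      have htne : (a' :: t) ≠ [] := List.cons_ne_nil _ _
      have h1 : (c :: l).getLast? = some b := by
        rw [List.getLast?_eq_getLast_of_ne_nil (List.cons_ne_nil _ _)]
        exact congrArg some hlast
      rw [hst, List.getLast?_append_of_ne_nil _ htne,
        List.getLast?_eq_getLast_of_ne_nil htne] at h1
      have hlast' : (a' :: t).getLast htne = b := by
        exact Option.some_injective _ h1
      exact ⟨t, hchain', hlast', hnodup.sublist hsuff.sublist⟩
    · refine ⟨c :: l, List.Chain.cons hac hchain, ?_, List.nodup_cons.2 ⟨hmem, hnodup⟩⟩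
      rw [List.getLast_cons_cons]; exact hlast

section Main

variable {n r : ℕ}

theorem tight_inter_union (F : Finset (Fin n) → ℝ) (hF : Submodular F)
    (x : EuclideanSpace ℝ (Fin n)) (hx : ∀ A, ∑ w ∈ A, x w ≤ F A)
    {A B : Finset (Fin n)} (hA : ∑ w ∈ A, x w = F A) (hB : ∑ w ∈ B, x w = F B) :
    (∑ w ∈ A ∩ B, x w = F (A ∩ B)) ∧ (∑ w ∈ A ∪ B, x w = F (A ∪ B)) := by
  have h1 := hx (A ∩ B)
  have h2 := hx (A ∪ B)
  have h3 := hF A B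
  have h4 : ∑ w ∈ A ∪ B, x w + ∑ w ∈ A ∩ B, x w = ∑ w ∈ A, x w + ∑ w ∈ B, x w :=
    Finset.sum_union_inter
  constructor <;> linarith

theorem tight_inter_family (F : Finset (Fin n) → ℝ) (hF : Submodular F)
    (x : EuclideanSpace ℝ (Fin n)) (hx : ∀ A, ∑ w ∈ A, x w ≤ F A)
    {ι : Type*} (S : Finset ι) (hS : S.Nonempty) (f : ι → Finset (Fin n))
    (ht : ∀ a ∈ S, ∑ w ∈ f a, x w = F (f a)) :
    ∃ T, (∑ w ∈ T, x w = F T) ∧ (∀ a ∈ S, T ⊆ f a) ∧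
      (∀ b, (∀ a ∈ S, b ∈ f a) → b ∈ T) := by
  classical
  induction hS using Finset.Nonempty.cons_induction with
  | singleton a => exact ⟨f a, ht a (Finset.mem_singleton_self a), by simp, by simp⟩
  | cons a S ha hS ih =>
    obtain ⟨T, hT1, hT2, hT3⟩ := ih (fun b hb => ht b (Finset.mem_cons_of_mem hb))
    have hfa : ∑ w ∈ f a, x w = F (f a) := ht a (Finset.mem_cons_self a S)
    refine ⟨T ∩ f a, (tight_inter_union F hF x hx hT1 hfa).1, ?_, ?_⟩
    · intro b hb
      rcases Finset.mem_cons.1 hb with h | h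
      · subst h; exact Finset.inter_subset_right
      · exact Finset.inter_subset_left.trans (hT2 b h)
    · intro b hb
      exact Finset.mem_inter.2 ⟨hT3 b fun a' ha' => hb a' (Finset.mem_cons_of_mem ha'),
        hb a (Finset.mem_cons_self a S)⟩

theorem tight_union_family (F : Finset (Fin n) → ℝ) (hF : Submodular F)
    (x : EuclideanSpace ℝ (Fin n)) (hx : ∀ A, ∑ w ∈ A, x w ≤ F A)
    {ι : Type*} (S : Finset ι) (hS : S.Nonempty) (f : ι → Finset (Fin n))
    (ht : ∀ a ∈ S, ∑ w ∈ f a, x w = F (f a)) :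
    ∃ T, (∑ w ∈ T, x w = F T) ∧ (∀ a ∈ S, f a ⊆ T) ∧
      (∀ b ∈ T, ∃ a ∈ S, b ∈ f a) := by
  classical
  induction hS using Finset.Nonempty.cons_induction with
  | singleton a =>
    exact ⟨f a, ht a (Finset.mem_singleton_self a), by simp,
      fun b hb => ⟨a, Finset.mem_singleton_self a, hb⟩⟩
  | cons a S ha hS ih =>
    obtain ⟨T, hT1, hT2, hT3⟩ := ih (fun b hb => ht b (Finset.mem_cons_of_mem hb))
    have hfa : ∑ w ∈ f a, x w = F (f a) := ht a (Finset.mem_cons_self a S)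
    refine ⟨T ∪ f a, (tight_inter_union F hF x hx hT1 hfa).2, ?_, ?_⟩
    · intro b hb
      rcases Finset.mem_cons.1 hb with h | h
      · subst h; exact Finset.subset_union_right
      · exact (hT2 b h).trans Finset.subset_union_left
    · intro b hb
      rcases Finset.mem_union.1 hb with h | h
      · obtain ⟨a', ha', h⟩ := hT3 b h
        exact ⟨a', Finset.mem_cons_of_mem ha', h⟩
      · exact ⟨a, Finset.mem_cons_self a S, h⟩

set_option maxHeartbeats 2000000 in
open Finset in
theorem augment (hn : 1 ≤ n) (hr : 1 ≤ r) (F : Fin r → Finset (Fin n) → ℝ)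
    (hsub : ∀ i, Submodular (F i)) (x z : Vec n r)
    (hx : x ∈ feas n r F) (hz : z ∈ feas n r F)
    (hd : ∃ w₀, (∑ i, x i w₀) ≠ (∑ i, z i w₀)) :
    ∃ x' ∈ feas n r F, ∃ δ : ℝ, 0 < δ ∧
      (∑ w, |(∑ i, x' i w) - ∑ i, z i w|) = (∑ w, |(∑ i, x i w) - ∑ i, z i w|) - 2*δ ∧
      (∑ i, ∑ w, |x' i w - x i w|) ≤ 2*((n:ℝ)-1)*δ ∧
      (∀ i w, |x' i w - x i w| ≤ δ) := by
  classical
  set d : Fin n → ℝ := fun w => (∑ i, x i w) - ∑ i, z i w with hd_def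
  have hsum0 : ∑ w, d w = 0 := by
    have h1 : ∑ w, ∑ i, x i w = ∑ i, ∑ w, x i w := Finset.sum_comm
    have h2 : ∑ w, ∑ i, z i w = ∑ i, ∑ w, z i w := Finset.sum_comm
    simp only [hd_def, Finset.sum_sub_distrib, h1, h2]
    rw [Finset.sum_congr rfl (fun i _ => (hx i).2), Finset.sum_congr rfl (fun i _ => (hz i).2)]
    ring
  obtain ⟨w₀, hw₀⟩ := hd
  have hw₀' : d w₀ ≠ 0 := sub_ne_zero.2 hw₀
  have hpos : ∃ u, 0 < d u := by
    by_contra hcon; push_neg at hcon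
    have : ∑ w, d w < ∑ w, (0:ℝ) :=
      Finset.sum_lt_sum (fun w _ => hcon w) ⟨w₀, Finset.mem_univ _, lt_of_le_of_ne (hcon w₀) hw₀'⟩
    simp [hsum0] at this
  have hneg : ∃ v, d v < 0 := by
    by_contra hcon; push_neg at hcon
    have : ∑ w, (0:ℝ) < ∑ w, d w :=
      Finset.sum_lt_sum (fun w _ => hcon w) ⟨w₀, Finset.mem_univ _, lt_of_le_of_ne (hcon w₀) (Ne.symm hw₀')⟩
    simp [hsum0] at this
  set P : Fin r → Fin n → Fin n → Prop :=
    fun i a b => ∀ A : Finset (Fin n), b ∈ A → a ∉ A → ∑ w ∈ A, x i w < F i A with hP_def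
  set Arc : Fin n → Fin n → Prop := fun a b => ∃ i, P i a b with hArc_def
  set R : Set (Fin n) := {b | ∃ u, 0 < d u ∧ Relation.ReflTransGen Arc u b} with hR_def
  -- Step 1 : some negative-discrepancy vertex is reachable
  have hreach : ∃ v, d v < 0 ∧ v ∈ R := by
    by_contra hcon
    push_neg at hcon
    set Qf : Finset (Fin n) := Finset.univ.filter (fun w => w ∉ R) with hQf_def
    obtain ⟨v₀, hv₀⟩ := hneg
    have hv₀Q : v₀ ∈ Qf := by simp [hQf_def]; exact hcon v₀ hv₀
    have hQtight : ∀ i, ∑ w ∈ Qf, x i w = F i Qf := by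
      intro i
      have hTb : ∀ b, b ∈ Qf → ∃ T : Finset (Fin n),
          (∑ w ∈ T, x i w = F i T) ∧ b ∈ T ∧ T ⊆ Qf := by
        intro b hb
        have hbR : b ∉ R := by simpa [hQf_def] using hb
        set Rf : Finset (Fin n) := Finset.univ.filter (fun w => w ∈ R) with hRf_def
        have hRfne : Rf.Nonempty := by
          obtain ⟨u, hu⟩ := hpos
          exact ⟨u, by simp [hRf_def, hR_def]; exact ⟨u, hu, Relation.ReflTransGen.refl⟩⟩
        have hsep : ∀ a : Fin n, ∃ A : Finset (Fin n), a ∈ Rf →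
            ((∑ w ∈ A, x i w = F i A) ∧ b ∈ A ∧ a ∉ A) := by
          intro a
          by_cases ha : a ∈ Rf
          · have haR : a ∈ R := by simpa [hRf_def] using ha
            have hnarc : ¬ Arc a b := by
              intro harc
              obtain ⟨u, hu, hpath⟩ := haR
              exact hbR ⟨u, hu, hpath.tail harc⟩
            have hnp : ¬ P i a b := fun hp => hnarc ⟨i, hp⟩
            simp only [hP_def, not_forall, not_lt, exists_prop] at hnp
            obtain ⟨A, h1, h2, h3⟩ := hnp
            exact ⟨A, fun _ => ⟨le_antisymm ((hx i).1 A) h3, h1, h2⟩⟩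
          · exact ⟨∅, fun h => absurd h ha⟩
        choose Asep hAsep using hsep
        obtain ⟨T, hT1, hT2, hT3⟩ := tight_inter_family (F i) (hsub i) (x i) ((hx i).1)
          Rf hRfne Asep (fun a ha => (hAsep a ha).1)
        refine ⟨T, hT1, hT3 b (fun a ha => (hAsep a ha).2.1), ?_⟩
        intro c hc
        by_contra hcQ
        have hcRf : c ∈ Rf := by
          simp [hRf_def]
          simpa [hQf_def] using hcQ
        exact (hAsep c hcRf).2.2 (hT2 c hcRf hc)
      choose Tb hTb1 hTb2 hTb3 using hTb
      have hQfne : Qf.Nonempty := ⟨v₀, hv₀Q⟩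
      set f : Fin n → Finset (Fin n) := fun b => if h : b ∈ Qf then Tb b h else ∅ with hf_def
      obtain ⟨U, hU1, hU2, hU3⟩ := tight_union_family (F i) (hsub i) (x i) ((hx i).1)
        Qf hQfne f (fun b hb => by rw [hf_def]; simp only [dif_pos hb]; exact hTb1 b hb)
      have hUQ : U = Qf := by
        apply Finset.Subset.antisymm
        · intro c hc
          obtain ⟨b, hb, hcb⟩ := hU3 c hc
          rw [hf_def] at hcb; simp only [dif_pos hb] at hcb
          exact hTb3 b hb hcb
        · intro b hb
          have : b ∈ f b := by rw [hf_def]; simp only [dif_pos hb]; exact hTb2 b hb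
          exact hU2 b hb this
      rw [← hUQ]; exact hU1
    have hge : (0:ℝ) ≤ ∑ w ∈ Qf, d w := by
      have h1 : ∑ w ∈ Qf, d w = ∑ i, ((∑ w ∈ Qf, x i w) - ∑ w ∈ Qf, z i w) := by
        simp only [hd_def, Finset.sum_sub_distrib]
        rw [Finset.sum_comm (f := fun w i => x i w), Finset.sum_comm (f := fun w i => z i w)]
      rw [h1]
      apply Finset.sum_nonneg
      intro i _
      have := (hz i).1 Qf
      have := hQtight i
      linarith
    have hlt : ∑ w ∈ Qf, d w < 0 := by
      have hle : ∀ w ∈ Qf, d w ≤ (fun _ => (0:ℝ)) w := by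
        intro w hw
        by_contra hp
        push_neg at hp
        have hwR : w ∈ R := ⟨w, hp, Relation.ReflTransGen.refl⟩
        simp [hQf_def] at hw
        exact hw hwR
      have := Finset.sum_lt_sum hle ⟨v₀, hv₀Q, by simpa using hv₀⟩
      simpa using this
    linarith
  obtain ⟨v, hv, u, hu, hpath⟩ := hreach
  have huv : u ≠ v := fun h => by rw [h] at hu; linarith
  obtain ⟨l, hchain, hlast, hnodup⟩ := exists_nodup_chain hpath
  set m : List (Fin n) := u :: l with hm_def
  set k : ℕ := l.length with hk_def
  have hmlen : m.length = k + 1 := by simp [hm_def, hk_def]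
  set vtx : ℕ → Fin n := fun j => m.getD j v with hvtx_def
  have hk1n : k + 1 ≤ n := by
    have := hnodup.length_le_card
    simpa [hmlen] using this
  have hgetD : ∀ j, (h : j < m.length) → vtx j = m[j] := fun j h =>
    List.getD_eq_getElem m v h
  have hvtx0 : vtx 0 = u := rfl
  have hvtxk : vtx k = v := by
    have h1 : k < m.length := by omega
    have h2 : m.length - 1 = k := by omega
    rw [hgetD k h1, ← hlast, List.getLast_eq_getElem]
    simp [hm_def, hk_def]
  have hinj : ∀ j1, j1 < k + 1 → ∀ j2, j2 < k + 1 → vtx j1 = vtx j2 → j1 = j2 := by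
    intro j1 h1 j2 h2 he
    rw [hgetD j1 (by omega), hgetD j2 (by omega)] at he
    exact (List.Nodup.getElem_inj_iff hnodup).1 he
  have harc : ∀ j, j < k → Arc (vtx j) (vtx (j + 1)) := by
    intro j hj
    have hchain' : List.Chain' Arc m := hchain
    have h2 := List.isChain_iff_getElem.1 hchain' j (by omega)
    rw [hgetD j (by omega), hgetD (j+1) (by omega)]
    simpa [List.get_eq_getElem] using h2
  have hblk0 : ∀ j, ∃ i : Fin r, j < k → P i (vtx j) (vtx (j + 1)) := by
    intro j
    by_cases hj : j < k
    · obtain ⟨i, hi⟩ := harc j hj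
      exact ⟨i, fun _ => hi⟩
    · exact ⟨⟨0, hr⟩, fun h => absurd h hj⟩
  choose blk hblk using hblk0
  -- the slack
  set SS : Finset (Fin r × Finset (Fin n)) :=
    Finset.univ.filter (fun p => ∑ w ∈ p.2, x p.1 w < F p.1 p.2) with hSS_def
  have hSSne : SS.Nonempty := by
    by_contra hemp
    rw [Finset.not_nonempty_iff_eq_empty] at hemp
    have hall : ∀ (i : Fin r) (A : Finset (Fin n)), ∑ w ∈ A, x i w = F i A := by
      intro i A
      have : (i, A) ∉ SS := by rw [hemp]; exact Finset.notMem_empty _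
      simp only [hSS_def, Finset.mem_filter, Finset.mem_univ, true_and, not_lt] at this
      exact le_antisymm ((hx i).1 A) this
    have hzx : ∀ (i : Fin r) (w : Fin n), z i w ≤ x i w := by
      intro i w
      have h1 := (hz i).1 {w}
      have h2 := hall i {w}
      simp only [Finset.sum_singleton] at h1 h2
      linarith
    have hzx2 : ∀ (i : Fin r) (w : Fin n), z i w = x i w := by
      intro i w
      by_contra hne
      have : ∑ w', z i w' < ∑ w', x i w' :=
        Finset.sum_lt_sum (fun w' _ => hzx i w')
          ⟨w, Finset.mem_univ w, lt_of_le_of_ne (hzx i w) hne⟩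
      rw [(hz i).2, (hx i).2] at this
      exact lt_irrefl _ this
    exact hw₀ (by simp [hzx2])
  set σ : ℝ := SS.inf' hSSne (fun p => F p.1 p.2 - ∑ w ∈ p.2, x p.1 w) with hσ_def
  have hσpos : 0 < σ := by
    rw [hσ_def, Finset.lt_inf'_iff]
    intro p hp
    simp only [hSS_def, Finset.mem_filter, Finset.mem_univ, true_and] at hp
    linarith
  have hnR : (0:ℝ) < n := by exact_mod_cast Nat.lt_of_lt_of_le Nat.zero_lt_one hn
  set δ : ℝ := min (σ / n) (min (d u) (-(d v))) with hδ_def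
  have hδpos : 0 < δ :=
    lt_min (div_pos hσpos hnR) (lt_min hu (by linarith))
  have hδu : δ ≤ d u := (min_le_right _ _).trans (min_le_left _ _)
  have hδv : δ ≤ -(d v) := (min_le_right _ _).trans (min_le_right _ _)
  have hδσ : δ ≤ σ / n := min_le_left _ _
  -- the new point
  set T : ℕ → Fin n → ℝ :=
    fun j w => (if vtx (j+1) = w then (1:ℝ) else 0) - (if vtx j = w then 1 else 0) with hT_def
  set x' : Vec n r := WithLp.toLp 2 (fun i => WithLp.toLp 2 (fun w =>
    x i w + δ * ∑ j ∈ Finset.range k, (if blk j = i then T j w else 0))) with hx'_def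
    -- indicator counting
  have hind01 : ∀ (mm : ℕ) (w : Fin n), (0:ℝ) ≤ (if vtx mm = w then (1:ℝ) else 0) := by
    intro mm w; split <;> norm_num
  have hcount : ∀ w : Fin n,
      ∑ mm ∈ Finset.range (k+1), (if vtx mm = w then (1:ℝ) else 0) ≤ 1 := by
    intro w
    rw [Finset.sum_boole]
    have hcard : ((Finset.range (k+1)).filter (fun mm => vtx mm = w)).card ≤ 1 := by
      rw [Finset.card_le_one]
      intro a ha b hb
      simp only [Finset.mem_filter, Finset.mem_range] at ha hb
      exact hinj a ha.1 b hb.1 (ha.2.trans hb.2.symm)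
    exact_mod_cast hcard
  have hTbound : ∀ (w : Fin n) (J : Finset ℕ), J ⊆ Finset.range k → |∑ j ∈ J, T j w| ≤ 1 := by
    intro w J hJ
    have hsplit : ∑ j ∈ J, T j w =
        (∑ j ∈ J, if vtx (j+1) = w then (1:ℝ) else 0)
          - ∑ j ∈ J, (if vtx j = w then (1:ℝ) else 0) := by
      simp only [hT_def]; rw [Finset.sum_sub_distrib]
    have himg := Finset.sum_image (s := J) (g := fun j => j + 1)
      (f := fun mm => if vtx mm = w then (1:ℝ) else 0) (fun a _ b _ h => by simpa using h)
    have h1 : ∑ j ∈ J, (if vtx (j+1) = w then (1:ℝ) else 0) ≤ 1 := by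
      rw [← himg]
      refine le_trans (Finset.sum_le_sum_of_subset_of_nonneg ?_ (fun mm _ _ => hind01 mm w)) (hcount w)
      intro mm hmm
      simp only [Finset.mem_image] at hmm
      obtain ⟨j, hjJ, rfl⟩ := hmm
      have := hJ hjJ
      simp only [Finset.mem_range] at this ⊢
      omega
    have h2 : ∑ j ∈ J, (if vtx j = w then (1:ℝ) else 0) ≤ 1 := by
      refine le_trans (Finset.sum_le_sum_of_subset_of_nonneg ?_ (fun mm _ _ => hind01 mm w)) (hcount w)
      refine hJ.trans ?_
      intro mm hmm
      simp only [Finset.mem_range] at hmm ⊢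
      omega
    have h3 : (0:ℝ) ≤ ∑ j ∈ J, (if vtx (j+1) = w then (1:ℝ) else 0) :=
      Finset.sum_nonneg fun j _ => hind01 _ w
    have h4 : (0:ℝ) ≤ ∑ j ∈ J, (if vtx j = w then (1:ℝ) else 0) :=
      Finset.sum_nonneg fun j _ => hind01 _ w
    rw [abs_le]
    constructor <;> linarith [hsplit]
  -- swap lemma
  have hswap : ∀ (i : Fin r) (A : Finset (Fin n)), ∑ w ∈ A, x' i w
      = ∑ w ∈ A, x i w + δ * ∑ j ∈ Finset.range k,
        (if blk j = i then ((if vtx (j+1) ∈ A then (1:ℝ) else 0)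
          - (if vtx j ∈ A then 1 else 0)) else 0) := by
    intro i A
    simp only [hx'_def]
    rw [Finset.sum_add_distrib]
    congr 1
    rw [← Finset.mul_sum]
    congr 1
    rw [Finset.sum_comm]
    refine Finset.sum_congr rfl (fun j _ => ?_)
    by_cases hb : blk j = i
    · simp only [hb, if_true, hT_def]
      rw [Finset.sum_sub_distrib]
      congr 1
      · rw [Finset.sum_ite_eq A (vtx (j+1)) (fun _ => (1:ℝ))]
      · rw [Finset.sum_ite_eq A (vtx j) (fun _ => (1:ℝ))]
    · simp [hb]
  -- feasibility
  have hfeas' : x' ∈ feas n r F := by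
    intro i
    have hbase := hx i
    constructor
    · intro A
      rw [hswap i A]
      by_cases htight : ∑ w ∈ A, x i w = F i A
      · have hterm : ∀ j ∈ Finset.range k,
            (if blk j = i then ((if vtx (j+1) ∈ A then (1:ℝ) else 0)
              - (if vtx j ∈ A then 1 else 0)) else 0) ≤ 0 := by
          intro j hj
          rw [Finset.mem_range] at hj
          by_cases hb : blk j = i
          · simp only [hb, if_true]
            by_cases h1 : vtx (j+1) ∈ A
            · by_cases h2 : vtx j ∈ A
              · simp [h1, h2]
              · exfalso
                have hp := hblk j hj
                rw [hb] at hp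
                exact absurd htight (ne_of_lt (hp A h1 h2))
            · simp only [h1, if_false]
              split <;> norm_num
          · simp [hb]
        have hs := Finset.sum_nonpos hterm
        have := mul_nonpos_of_nonneg_of_nonpos hδpos.le hs
        linarith
      · have hmem : (i, A) ∈ SS := by
          simp only [hSS_def, Finset.mem_filter, Finset.mem_univ, true_and]
          exact lt_of_le_of_ne (hbase.1 A) htight
        have hσle : σ ≤ F i A - ∑ w ∈ A, x i w := by
          rw [hσ_def]; exact Finset.inf'_le _ hmem
        have hone : ∀ j ∈ Finset.range k,
            (if blk j = i then ((if vtx (j+1) ∈ A then (1:ℝ) else 0)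
              - (if vtx j ∈ A then 1 else 0)) else 0) ≤ (1:ℝ) := by
          intro j _
          by_cases hb : blk j = i
          · simp only [hb, if_true]; split <;> split <;> norm_num
          · simp [hb]
        have hsk : ∑ j ∈ Finset.range k,
            (if blk j = i then ((if vtx (j+1) ∈ A then (1:ℝ) else 0)
              - (if vtx j ∈ A then 1 else 0)) else 0) ≤ (k:ℝ) := by
          calc _ ≤ ∑ _j ∈ Finset.range k, (1:ℝ) := Finset.sum_le_sum hone
            _ = (k:ℝ) := by simp
        have hkn : (k:ℝ) ≤ (n:ℝ) - 1 := by
          have : (k:ℝ) + 1 ≤ (n:ℝ) := by exact_mod_cast hk1n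
          linarith
        have hδk : δ * (∑ j ∈ Finset.range k,
            (if blk j = i then ((if vtx (j+1) ∈ A then (1:ℝ) else 0)
              - (if vtx j ∈ A then 1 else 0)) else 0)) ≤ δ * (k:ℝ) :=
          mul_le_mul_of_nonneg_left hsk hδpos.le
        have h5 : δ * (k:ℝ) ≤ (σ/n) * ((n:ℝ)-1) := by
          apply mul_le_mul hδσ hkn (by positivity) (by positivity)
        have h6 : (σ/n) * ((n:ℝ)-1) < σ := by
          rw [div_mul_eq_mul_div, div_lt_iff₀ hnR]
          nlinarith
        linarith
    · rw [hswap i Finset.univ]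
      have hzero : ∀ j ∈ Finset.range k,
          (if blk j = i then ((if vtx (j+1) ∈ Finset.univ then (1:ℝ) else 0)
            - (if vtx j ∈ Finset.univ then 1 else 0)) else 0) = 0 := by
        intro j _
        simp
      rw [Finset.sum_congr rfl hzero]
      simp [hbase.2]
  -- per-coordinate bound
  have hcoord : ∀ (i : Fin r) (w : Fin n), |x' i w - x i w| ≤ δ := by
    intro i w
    have hrw : x' i w - x i w
        = δ * ∑ j ∈ (Finset.range k).filter (fun j => blk j = i), T j w := by
      simp only [hx'_def]
      rw [Finset.sum_filter]
      ring
    rw [hrw, abs_mul, abs_of_pos hδpos]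
    have := hTbound w _ (Finset.filter_subset (fun j => blk j = i) (Finset.range k))
    nlinarith [hδpos.le]
  -- total ℓ1 movement
  have hTw2 : ∀ j, ∑ w, |T j w| ≤ 2 := by
    intro j
    have hptw : ∀ w, |T j w| ≤ (if vtx (j+1) = w then (1:ℝ) else 0)
        + (if vtx j = w then (1:ℝ) else 0) := by
      intro w
      by_cases h1 : vtx (j+1) = w <;> by_cases h2 : vtx j = w <;>
        simp [hT_def, h1, h2]
    calc ∑ w, |T j w| ≤ ∑ w, ((if vtx (j+1) = w then (1:ℝ) else 0)
        + (if vtx j = w then (1:ℝ) else 0)) := Finset.sum_le_sum (fun w _ => hptw w)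
      _ = 2 := by
        rw [Finset.sum_add_distrib,
          Finset.sum_ite_eq Finset.univ (vtx (j+1)) (fun _ => (1:ℝ)),
          Finset.sum_ite_eq Finset.univ (vtx j) (fun _ => (1:ℝ))]
        norm_num
  have hl1 : (∑ i, ∑ w, |x' i w - x i w|) ≤ 2*((n:ℝ)-1)*δ := by
    have habs : ∀ (i : Fin r) (w : Fin n), |x' i w - x i w|
        ≤ δ * ∑ j ∈ (Finset.range k).filter (fun j => blk j = i), |T j w| := by
      intro i w
      have hrw : x' i w - x i w
          = δ * ∑ j ∈ (Finset.range k).filter (fun j => blk j = i), T j w := by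
        simp only [hx'_def]
        rw [Finset.sum_filter]
        ring
      rw [hrw, abs_mul, abs_of_pos hδpos]
      exact mul_le_mul_of_nonneg_left (Finset.abs_sum_le_sum_abs _ _) hδpos.le
    have hkn : (k:ℝ) ≤ (n:ℝ) - 1 := by
      have : (k:ℝ) + 1 ≤ (n:ℝ) := by exact_mod_cast hk1n
      linarith
    calc (∑ i, ∑ w, |x' i w - x i w|)
        ≤ ∑ i, ∑ w, δ * ∑ j ∈ (Finset.range k).filter (fun j => blk j = i), |T j w| :=
          Finset.sum_le_sum (fun i _ => Finset.sum_le_sum (fun w _ => habs i w))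
      _ = δ * ∑ i, ∑ j ∈ (Finset.range k).filter (fun j => blk j = i), ∑ w, |T j w| := by
          rw [Finset.mul_sum]
          refine Finset.sum_congr rfl (fun i _ => ?_)
          rw [← Finset.mul_sum]
          congr 1
          rw [Finset.sum_comm]
      _ = δ * ∑ j ∈ Finset.range k, ∑ w, |T j w| := by
          congr 1
          exact Finset.sum_fiberwise_of_maps_to (fun j _ => Finset.mem_univ (blk j)) _
      _ ≤ δ * ∑ _j ∈ Finset.range k, (2:ℝ) :=
          mul_le_mul_of_nonneg_left (Finset.sum_le_sum (fun j _ => hTw2 j)) hδpos.le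
      _ = δ * (2*(k:ℝ)) := by simp [mul_comm]
      _ ≤ 2*((n:ℝ)-1)*δ := by nlinarith
  -- ℓ1 decrease
  have hsw : ∀ w, (∑ i, x' i w) = (∑ i, x i w)
      + δ * ((if v = w then (1:ℝ) else 0) - (if u = w then 1 else 0)) := by
    intro w
    simp only [hx'_def]
    rw [Finset.sum_add_distrib]
    congr 1
    rw [← Finset.mul_sum]
    congr 1
    rw [Finset.sum_comm]
    have hone : ∀ j, (∑ i, if blk j = i then T j w else 0) = T j w := by
      intro j
      rw [Finset.sum_ite_eq Finset.univ (blk j) (fun _ => T j w)]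
      simp
    rw [Finset.sum_congr rfl (fun j _ => hone j)]
    have htele := Finset.sum_range_sub (f := fun mm => if vtx mm = w then (1:ℝ) else 0) k
    simp only [hT_def]
    rw [htele, hvtxk, hvtx0]
  have hterm : ∀ w, |(∑ i, x' i w) - ∑ i, z i w|
      = |d w| - ((if u = w then δ else 0) + (if v = w then δ else 0)) := by
    intro w
    by_cases h1 : u = w
    · subst h1
      have h2 : ¬ v = u := fun h => huv h.symm
      rw [hsw u]
      simp only [h2, if_false, eq_self_iff_true, if_true]
      have e1 : ∑ i, x i u + δ * ((0:ℝ) - 1) - ∑ i, z i u = d u - δ := by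
        simp only [hd_def]; ring
      rw [e1, abs_of_nonneg (by linarith), abs_of_pos hu]
      ring
    · by_cases h2 : v = w
      · subst h2
        rw [hsw v]
        simp only [h1, if_false, eq_self_iff_true, if_true]
        have e1 : ∑ i, x i v + δ * ((1:ℝ) - 0) - ∑ i, z i v = d v + δ := by
          simp only [hd_def]; ring
        rw [e1, abs_of_nonpos (by linarith), abs_of_neg hv]
        ring
      · rw [hsw w]
        simp only [h1, h2, if_false]
        have e1 : ∑ i, x i w + δ * ((0:ℝ) - 0) - ∑ i, z i w = d w := by
          simp only [hd_def]; ring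
        rw [e1]
        ring
  have hdecr : (∑ w, |(∑ i, x' i w) - ∑ i, z i w|)
      = (∑ w, |(∑ i, x i w) - ∑ i, z i w|) - 2*δ := by
    rw [Finset.sum_congr rfl (fun w _ => hterm w)]
    rw [Finset.sum_sub_distrib, Finset.sum_add_distrib]
    rw [Finset.sum_ite_eq Finset.univ u (fun _ => δ), Finset.sum_ite_eq Finset.univ v (fun _ => δ)]
    simp only [Finset.mem_univ, if_true]
    have habs2 : ∀ w, |d w| = |(∑ i, x i w) - ∑ i, z i w| := fun w => rfl
    rw [Finset.sum_congr rfl (fun w _ => habs2 w)]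
    ring
  exact ⟨x', hfeas', δ, hδpos, hdecr, hl1, hcoord⟩

open Finset in
theorem close_point (hn : 1 ≤ n) (hr : 1 ≤ r) (F : Fin r → Finset (Fin n) → ℝ)
    (hsub : ∀ i, Submodular (F i)) (y z : Vec n r)
    (hy : y ∈ feas n r F) (hz : z ∈ feas n r F) :
    ∃ x ∈ feas n r F, (∀ w, (∑ i, x i w) = ∑ i, z i w) ∧
      (∑ i, ∑ w, |x i w - y i w|) ≤ ((n:ℝ)-1) * (∑ w, |(∑ i, y i w) - ∑ i, z i w|) ∧
      (∀ i w, |x i w - y i w| ≤ (∑ w, |(∑ i, y i w) - ∑ i, z i w|)/2) := by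
  classical
  set D : ℝ := ∑ w, |(∑ i, y i w) - ∑ i, z i w| with hD_def
  set Φ : Vec n r → ℝ := fun x => ∑ w, |(∑ i, x i w) - ∑ i, z i w| with hΦ_def
  set mv : Vec n r → ℝ := fun x => ∑ i, ∑ w, |x i w - y i w| with hmv_def
  have hco : ∀ (i : Fin r) (w : Fin n), Continuous (fun x : Vec n r => x i w) :=
    fun i w => (PiLp.continuous_apply 2 _ w).comp (PiLp.continuous_apply 2 _ i)
  have hΦc : Continuous Φ := by
    rw [hΦ_def]
    apply continuous_finset_sum
    intro w _
    exact ((continuous_finset_sum _ (fun i _ => hco i w)).sub continuous_const).abs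
  have hmvc : Continuous mv := by
    rw [hmv_def]
    apply continuous_finset_sum
    intro i _
    apply continuous_finset_sum
    intro w _
    exact ((hco i w).sub continuous_const).abs
  set K : Set (Vec n r) := {x | x ∈ feas n r F ∧
      mv x ≤ ((n:ℝ)-1) * (D - Φ x) ∧ ∀ i w, |x i w - y i w| ≤ (D - Φ x)/2} with hK_def
  have hΦy : Φ y = D := rfl
  have hyK : y ∈ K := by
    refine ⟨hy, ?_, ?_⟩
    · rw [hΦy]
      simp [hmv_def]
    · intro i w
      rw [hΦy]
      simp
  have hfeas_closed : IsClosed (feas n r F) := by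
    have hrw : feas n r F = ⋂ (i : Fin r),
        ((⋂ (A : Finset (Fin n)), {x : Vec n r | ∑ w ∈ A, x i w ≤ F i A})
          ∩ {x : Vec n r | ∑ w, x i w = F i Finset.univ}) := by
      ext x
      simp only [feas, basePolytope, Set.mem_setOf_eq, Set.mem_iInter, Set.mem_inter_iff]
    rw [hrw]
    refine isClosed_iInter (fun i => IsClosed.inter (isClosed_iInter (fun A => ?_)) ?_)
    · exact isClosed_le (continuous_finset_sum _ (fun w _ => hco i w)) continuous_const
    · exact isClosed_eq (continuous_finset_sum _ (fun w _ => hco i w)) continuous_const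
  have hK_closed : IsClosed K := by
    have hrw : K = (feas n r F) ∩ ({x | mv x + ((n:ℝ)-1) * Φ x ≤ ((n:ℝ)-1) * D}
        ∩ ⋂ (i : Fin r), ⋂ (w : Fin n),
          {x : Vec n r | |x i w - y i w| + Φ x / 2 ≤ D/2}) := by
      ext x
      simp only [hK_def, Set.mem_inter_iff, Set.mem_setOf_eq, Set.mem_iInter]
      constructor
      · rintro ⟨h1, h2, h3⟩
        exact ⟨h1, by linarith, fun i w => by linarith [h3 i w]⟩
      · rintro ⟨h1, h2, h3⟩
        exact ⟨h1, by linarith, fun i w => by linarith [h3 i w]⟩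
    rw [hrw]
    refine hfeas_closed.inter (IsClosed.inter ?_ ?_)
    · exact isClosed_le (hmvc.add (continuous_const.mul hΦc)) continuous_const
    · refine isClosed_iInter (fun i => isClosed_iInter (fun w => ?_))
      exact isClosed_le ((((hco i w).sub continuous_const).abs).add
        (hΦc.div_const 2)) continuous_const
  have hnorm_sq : ∀ (q : Vec n r), ‖q‖^2 = ∑ i, ∑ w, (q i w)^2 := by
    intro q
    have h1 := PiLp.norm_sq_eq_of_L2 (fun _ : Fin r => EuclideanSpace ℝ (Fin n)) q
    rw [h1]
    refine Finset.sum_congr rfl (fun i _ => ?_)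
    have h2 := PiLp.norm_sq_eq_of_L2 (fun _ : Fin n => ℝ) (q i)
    rw [h2]
    refine Finset.sum_congr rfl (fun w _ => ?_)
    simp [Real.norm_eq_abs, sq_abs]
  have hbound : Bornology.IsBounded (feas n r F) := by
    rw [isBounded_iff_forall_norm_le]
    set C : ℝ := (∑ i : Fin r, ∑ w : Fin n,
      (|F i {w}| + |F i Finset.univ - F i (Finset.univ.erase w)|)) + 1 with hC_def
    have hterm_nonneg : ∀ (i : Fin r) (w : Fin n),
        (0:ℝ) ≤ |F i {w}| + |F i Finset.univ - F i (Finset.univ.erase w)| := by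
      intro i w; positivity
    have hCpos : 0 < C := by
      rw [hC_def]
      have : (0:ℝ) ≤ ∑ i : Fin r, ∑ w : Fin n,
          (|F i {w}| + |F i Finset.univ - F i (Finset.univ.erase w)|) :=
        Finset.sum_nonneg (fun i _ => Finset.sum_nonneg (fun w _ => hterm_nonneg i w))
      linarith
    refine ⟨Real.sqrt ((n:ℝ)*r*C^2), fun x hx => ?_⟩
    have hcoordC : ∀ (i : Fin r) (w : Fin n), |x i w| ≤ C := by
      intro i w
      have hup : x i w ≤ F i {w} := by
        have := (hx i).1 {w}
        simpa using this
      have hlow : F i Finset.univ - F i (Finset.univ.erase w) ≤ x i w := by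
        have h1 := (hx i).1 (Finset.univ.erase w)
        have h2 := (hx i).2
        have h3 : x i w + ∑ w' ∈ Finset.univ.erase w, x i w' = ∑ w', x i w' :=
          Finset.add_sum_erase Finset.univ (x i) (Finset.mem_univ w)
        linarith
      have habs : |x i w| ≤ |F i {w}| + |F i Finset.univ - F i (Finset.univ.erase w)| := by
        rw [abs_le]
        constructor
        · have := neg_abs_le (F i Finset.univ - F i (Finset.univ.erase w))
          have h2 := abs_nonneg (F i {w})
          linarith
        · have := le_abs_self (F i {w})
          have h2 := abs_nonneg (F i Finset.univ - F i (Finset.univ.erase w))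
          linarith
      refine habs.trans ?_
      rw [hC_def]
      have hsingle : |F i {w}| + |F i Finset.univ - F i (Finset.univ.erase w)|
          ≤ ∑ i' : Fin r, ∑ w' : Fin n,
            (|F i' {w'}| + |F i' Finset.univ - F i' (Finset.univ.erase w')|) := by
        have h1 : |F i {w}| + |F i Finset.univ - F i (Finset.univ.erase w)|
            ≤ ∑ w' : Fin n, (|F i {w'}| + |F i Finset.univ - F i (Finset.univ.erase w')|) :=
          Finset.single_le_sum (fun w' _ => hterm_nonneg i w') (Finset.mem_univ w)
        refine h1.trans ?_
        exact Finset.single_le_sum (fun i' _ => Finset.sum_nonneg (fun w' _ => hterm_nonneg i' w'))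
          (Finset.mem_univ i)
      linarith
    have hsq : ‖x‖^2 ≤ (n:ℝ)*r*C^2 := by
      rw [hnorm_sq x]
      calc ∑ i, ∑ w, (x i w)^2 ≤ ∑ i : Fin r, ∑ w : Fin n, C^2 := by
            refine Finset.sum_le_sum (fun i _ => Finset.sum_le_sum (fun w _ => ?_))
            have := hcoordC i w
            nlinarith [abs_nonneg (x i w), sq_abs (x i w)]
        _ = (r:ℝ) * ((n:ℝ) * C^2) := by simp [Finset.sum_const]
        _ = (n:ℝ)*r*C^2 := by ring
    have h0 : ‖x‖ = Real.sqrt (‖x‖^2) := (Real.sqrt_sq (norm_nonneg x)).symm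
    rw [h0]
    exact Real.sqrt_le_sqrt hsq
  have hKcpt : IsCompact K := by
    apply Metric.isCompact_of_isClosed_isBounded hK_closed
    exact hbound.subset (fun x hxK => hxK.1)
  obtain ⟨xh, hxhK, hmin⟩ := hKcpt.exists_isMinOn ⟨y, hyK⟩ hΦc.continuousOn
  have hΦ0 : Φ xh = 0 := by
    by_contra hne
    have hΦnn : 0 ≤ Φ xh := Finset.sum_nonneg (fun w _ => abs_nonneg _)
    have hΦpos : 0 < Φ xh := lt_of_le_of_ne hΦnn (Ne.symm hne)
    have hdne : ∃ w₀, (∑ i, xh i w₀) ≠ (∑ i, z i w₀) := by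
      by_contra hall
      push_neg at hall
      have : Φ xh = 0 := by
        rw [hΦ_def]
        refine Finset.sum_eq_zero (fun w _ => ?_)
        rw [hall w]
        simp
      exact hne this
    obtain ⟨x', hx'feas, δ, hδpos, hdecr, hl1, hcoord⟩ :=
      augment hn hr F hsub xh z hxhK.1 hz hdne
    have hΦx' : Φ x' = Φ xh - 2*δ := hdecr
    have hx'K : x' ∈ K := by
      refine ⟨hx'feas, ?_, ?_⟩
      · have htri : mv x' ≤ mv xh + ∑ i, ∑ w, |x' i w - xh i w| := by
          rw [hmv_def, ← Finset.sum_add_distrib]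
          refine Finset.sum_le_sum (fun i _ => ?_)
          rw [← Finset.sum_add_distrib]
          refine Finset.sum_le_sum (fun w _ => ?_)
          have := abs_sub_le (x' i w) (xh i w) (y i w)
          have h2 := abs_sub_comm (x' i w) (xh i w)
          linarith
        have h2 := hxhK.2.1
        rw [hΦx']
        linarith
      · intro i w
        have htri : |x' i w - y i w| ≤ |xh i w - y i w| + |x' i w - xh i w| := by
          have := abs_sub_le (x' i w) (xh i w) (y i w)
          have h2 := abs_sub_comm (x' i w) (xh i w)
          linarith
        have h2 := hxhK.2.2 i w
        have h3 := hcoord i w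
        rw [hΦx']
        linarith
    have hle : Φ xh ≤ Φ x' := hmin hx'K
    rw [hΦx'] at hle
    linarith
  refine ⟨xh, hxhK.1, ?_, ?_, ?_⟩
  · intro w
    have h1 : ∀ w' ∈ Finset.univ, (0:ℝ) ≤ |(∑ i, xh i w') - ∑ i, z i w'| :=
      fun w' _ => abs_nonneg _
    have h2 := (Finset.sum_eq_zero_iff_of_nonneg h1).1 hΦ0 w (Finset.mem_univ w)
    have h3 := abs_eq_zero.1 h2
    linarith
  · have := hxhK.2.1
    rw [hΦ0] at this
    simpa [hmv_def, hD_def] using this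
  · intro i w
    have := hxhK.2.2 i w
    rw [hΦ0] at this
    simpa [hD_def] using this

theorem hnorm_sq' : ∀ (q : Vec n r), ‖q‖^2 = ∑ i, ∑ w, (q i w)^2 := by
  intro q
  have h1 := PiLp.norm_sq_eq_of_L2 (fun _ : Fin r => EuclideanSpace ℝ (Fin n)) q
  rw [h1]
  refine Finset.sum_congr rfl (fun i _ => ?_)
  have h2 := PiLp.norm_sq_eq_of_L2 (fun _ : Fin n => ℝ) (q i)
  rw [h2]
  refine Finset.sum_congr rfl (fun w _ => ?_)
  simp [Real.norm_eq_abs, sq_abs]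

end Main

end Stmt9

open Stmt9 in
set_option maxHeartbeats 1000000 in
/-- For `y ∈ 𝒴` and `y*` an optimal solution of (Prox-DSM) closest to `y`
(so `g(y*)` is the optimal value `g*`),
`⟨∇g(y), y* - y⟩ ≤ -(2/(n²r + 1)) (g(y) - g* + ‖y - y*‖²)`. -/
theorem statement9 (n r : ℕ) (hn : 1 ≤ n) (hr : 1 ≤ r)
    (F : Fin r → Finset (Fin n) → ℝ)
    (hsub : ∀ i, Submodular (F i)) (hnorm : ∀ i, F i ∅ = 0)
    (y ystar : Vec n r) (hy : y ∈ feas n r F)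
    (hopt : IsOptimal n r F ystar)
    (hclosest : ∀ z : Vec n r, IsOptimal n r F z → ‖y - ystar‖ ≤ ‖y - z‖) :
    ⟪gradg n r y, ystar - y⟫
      ≤ -(2 / ((n : ℝ) ^ 2 * r + 1)) * (g n r y - g n r ystar + ‖y - ystar‖ ^ 2) := by
  classical
  set sy : EuclideanSpace ℝ (Fin n) := ∑ i, y i with hsy_def
  set ss : EuclideanSpace ℝ (Fin n) := ∑ i, ystar i with hss_def
  have happly : ∀ (q : Vec n r) (w : Fin n), (∑ i, q i) w = ∑ i, q i w :=
    fun q w => by rw [WithLp.ofLp_sum, Finset.sum_apply]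
  -- inner product identity
  have hinner : ⟪gradg n r y, ystar - y⟫ = 2 * ⟪sy, ss - sy⟫ := by
    rw [PiLp.inner_apply]
    have hblocks : ∀ i : Fin r, ⟪gradg n r y i, (ystar - y) i⟫
        = ⟪(2:ℝ) • sy, ystar i - y i⟫ := fun i => rfl
    rw [Finset.sum_congr rfl (fun i _ => hblocks i), ← inner_sum]
    rw [Finset.sum_sub_distrib]
    rw [real_inner_smul_left]
  have hiden : 2 * ⟪sy, ss - sy⟫ = ‖ss‖^2 - ‖sy‖^2 - ‖sy - ss‖^2 := by
    have h1 : ‖sy - ss‖^2 = ‖sy‖^2 - 2*⟪sy, ss⟫ + ‖ss‖^2 := norm_sub_sq_real sy ss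
    have h2 : ⟪sy, ss - sy⟫ = ⟪sy, ss⟫ - ⟪sy, sy⟫ := inner_sub_right sy ss sy
    have h3 : ⟪sy, sy⟫ = ‖sy‖^2 := real_inner_self_eq_norm_sq sy
    linarith
  -- the segment is feasible
  have hfeas_seg : ∀ t : ℝ, 0 ≤ t → t ≤ 1 → ystar + t • (y - ystar) ∈ feas n r F := by
    intro t ht0 ht1 i
    have h1A := (hopt.1 i).1
    have h2A := (hy i).1
    have hcoord : ∀ w, (ystar + t • (y - ystar)) i w
        = ystar i w + t * (y i w - ystar i w) := fun w => rfl
    constructor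
    · intro A
      have e : ∑ w ∈ A, (ystar + t • (y - ystar)) i w
          = (∑ w ∈ A, ystar i w) + t * ((∑ w ∈ A, y i w) - ∑ w ∈ A, ystar i w) := by
        rw [Finset.sum_congr rfl (fun w _ => hcoord w), Finset.sum_add_distrib,
          ← Finset.mul_sum, Finset.sum_sub_distrib]
      rw [e]
      have h1 := h1A A
      have h2 := h2A A
      nlinarith
    · have e : ∑ w, (ystar + t • (y - ystar)) i w
          = (∑ w, ystar i w) + t * ((∑ w, y i w) - ∑ w, ystar i w) := by
        rw [Finset.sum_congr rfl (fun w _ => hcoord w), Finset.sum_add_distrib,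
          ← Finset.mul_sum, Finset.sum_sub_distrib]
      rw [e, (hopt.1 i).2, (hy i).2]
      ring
  -- obtuse angle at the optimum
  have hobtuse : 0 ≤ ⟪ss, sy - ss⟫ := by
    have hval : ∀ t : ℝ, 0 ≤ t → t ≤ 1 → 0 ≤ 2*(t*⟪ss, sy - ss⟫) + t^2 * ‖sy - ss‖^2 := by
      intro t ht0 ht1
      have h1 := hopt.2 _ (hfeas_seg t ht0 ht1)
      have h2 : (∑ i, (ystar + t • (y - ystar)) i) = ss + t • (sy - ss) := by
        have hb : ∀ i : Fin r, (ystar + t • (y - ystar)) i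
            = ystar i + t • (y i - ystar i) := fun i => rfl
        rw [Finset.sum_congr rfl (fun i _ => hb i), Finset.sum_add_distrib,
          ← Finset.smul_sum, Finset.sum_sub_distrib]
      have h3 : g n r (ystar + t • (y - ystar)) = ‖ss + t • (sy - ss)‖^2 := by
        rw [g, h2]
      have h4 : g n r ystar = ‖ss‖^2 := by rw [g]
      have h5 : ‖ss + t • (sy - ss)‖^2
          = ‖ss‖^2 + 2*(t*⟪ss, sy - ss⟫) + t^2 * ‖sy - ss‖^2 := by
        rw [norm_add_sq_real, real_inner_smul_right, norm_smul, mul_pow,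
          Real.norm_eq_abs, sq_abs]
      rw [h3, h4, h5] at h1
      linarith
    by_cases hc0 : ‖sy - ss‖^2 = 0
    · have := hval 1 zero_le_one le_rfl
      rw [hc0] at this
      linarith
    · have hcpos : 0 < ‖sy - ss‖^2 := lt_of_le_of_ne (by positivity) (Ne.symm hc0)
      by_contra hip
      push_neg at hip
      set t0 : ℝ := min 1 (-⟪ss, sy - ss⟫/‖sy - ss‖^2) with ht0_def
      have ht00 : 0 < t0 := lt_min one_pos (div_pos (by linarith) hcpos)
      have hv := hval t0 ht00.le (min_le_left _ _)
      have ht0le : t0 ≤ -⟪ss, sy - ss⟫/‖sy - ss‖^2 := min_le_right _ _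
      have hmul : t0 * ‖sy - ss‖^2 ≤ -⟪ss, sy - ss⟫ := (le_div_iff₀ hcpos).1 ht0le
      nlinarith
  have hGQ : ‖sy - ss‖^2 ≤ ‖sy‖^2 - ‖ss‖^2 := by
    have h1 : ‖sy - ss‖^2 = ‖sy‖^2 - 2*⟪sy, ss⟫ + ‖ss‖^2 := norm_sub_sq_real sy ss
    have h2 : ⟪ss, sy - ss⟫ = ⟪ss, sy⟫ - ⟪ss, ss⟫ := inner_sub_right ss sy ss
    have h3 : ⟪ss, ss⟫ = ‖ss‖^2 := real_inner_self_eq_norm_sq ss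
    have h4 : ⟪ss, sy⟫ = ⟪sy, ss⟫ := real_inner_comm sy ss
    nlinarith [hobtuse]
  -- the close optimal point
  obtain ⟨xh, hxh_feas, hxh_sum, hxh_l1, hxh_linf⟩ :=
    close_point hn hr F hsub y ystar hy hopt.1
  set D : ℝ := ∑ w, |(∑ i, y i w) - ∑ i, ystar i w| with hD_def
  have hxh_opt : IsOptimal n r F xh := by
    refine ⟨hxh_feas, fun zz hzz => ?_⟩
    have hsum_eq : (∑ i, xh i) = ss := by
      ext w
      rw [happly, hss_def, happly]
      exact hxh_sum w
    have hgeq : g n r xh = g n r ystar := by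
      rw [g, g, hsum_eq]
    rw [hgeq]
    exact hopt.2 zz hzz
  have hW : ‖y - ystar‖ ≤ ‖y - xh‖ := hclosest xh hxh_opt
  have hQnn : (0:ℝ) ≤ ‖sy - ss‖^2 := by positivity
  have hDnn : 0 ≤ D := Finset.sum_nonneg (fun w _ => abs_nonneg _)
  -- D² ≤ n Q
  have hD2 : D^2 ≤ (n:ℝ) * ‖sy - ss‖^2 := by
    have h1 : ‖sy - ss‖^2 = ∑ w, ((∑ i, y i w) - ∑ i, ystar i w)^2 := by
      have h2 := PiLp.norm_sq_eq_of_L2 (fun _ : Fin n => ℝ) (sy - ss)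
      rw [h2]
      refine Finset.sum_congr rfl (fun w _ => ?_)
      have h3 : (sy - ss) w = (∑ i, y i w) - ∑ i, ystar i w := by
        have : (sy - ss) w = sy w - ss w := rfl
        rw [this, hsy_def, hss_def, happly, happly]
      rw [h3]
      simp [Real.norm_eq_abs, sq_abs]
    have h4 := sq_sum_le_card_mul_sum_sq (s := (Finset.univ : Finset (Fin n)))
      (f := fun w => |(∑ i, y i w) - ∑ i, ystar i w|)
    simp only [sq_abs, Finset.card_univ, Fintype.card_fin] at h4
    rw [hD_def, h1]
    exact_mod_cast h4
  have hyxh : ‖y - xh‖^2 ≤ ((n:ℝ)-1)/2 * D^2 := by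
    rw [hnorm_sq' (y - xh)]
    have hc : ∀ (i : Fin r) (w : Fin n), ((y - xh) i w)^2 ≤ (D/2) * |xh i w - y i w| := by
      intro i w
      have h1 : (y - xh) i w = y i w - xh i w := rfl
      have h2 : |y i w - xh i w| = |xh i w - y i w| := abs_sub_comm _ _
      have h3 := hxh_linf i w
      have h4 : ((y - xh) i w)^2 = |xh i w - y i w| * |xh i w - y i w| := by
        rw [h1, sq, ← abs_mul_abs_self (y i w - xh i w), h2]
      rw [h4]
      have := abs_nonneg (xh i w - y i w)
      nlinarith
    calc ∑ i, ∑ w, ((y - xh) i w)^2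
        ≤ ∑ i, ∑ w, (D/2) * |xh i w - y i w| :=
          Finset.sum_le_sum (fun i _ => Finset.sum_le_sum (fun w _ => hc i w))
      _ = (D/2) * ∑ i, ∑ w, |xh i w - y i w| := by
          rw [Finset.mul_sum]
          exact Finset.sum_congr rfl (fun i _ => by rw [Finset.mul_sum])
      _ ≤ (D/2) * (((n:ℝ)-1) * D) := by
          refine mul_le_mul_of_nonneg_left ?_ (by linarith)
          rw [hD_def]
          exact hxh_l1
      _ = ((n:ℝ)-1)/2 * D^2 := by ring
  -- assemble
  set N : ℝ := (n:ℝ)^2 * r with hN_def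
  have hn' : (1:ℝ) ≤ (n:ℝ) := by exact_mod_cast hn
  have hr' : (1:ℝ) ≤ (r:ℝ) := by exact_mod_cast hr
  have hN1 : 1 ≤ N := by nlinarith
  have hW2 : ‖y - ystar‖^2 ≤ N * ‖sy - ss‖^2 := by
    have h1 : ‖y - ystar‖^2 ≤ ‖y - xh‖^2 := by
      have := norm_nonneg (y - ystar)
      nlinarith
    have h2 : ((n:ℝ)-1)/2 * D^2 ≤ ((n:ℝ)-1)/2 * ((n:ℝ) * ‖sy - ss‖^2) := by
      refine mul_le_mul_of_nonneg_left hD2 (by linarith)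
    have h3 : ((n:ℝ)-1)/2 * ((n:ℝ) * ‖sy - ss‖^2) ≤ N * ‖sy - ss‖^2 := by
      rw [hN_def]
      nlinarith
    linarith
  have hgs : g n r y - g n r ystar = ‖sy‖^2 - ‖ss‖^2 := by
    rw [g, g]
  rw [hinner, hiden, hgs]
  have hden : (0:ℝ) < N + 1 := by linarith
  have hkey : (2/(N+1)) * ((‖sy‖^2 - ‖ss‖^2) + ‖y - ystar‖^2) ≤ (‖sy‖^2 - ‖ss‖^2) + ‖sy - ss‖^2 := by
    rw [div_mul_eq_mul_div, div_le_iff₀ hden]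
    have hGnn : 0 ≤ ‖sy‖^2 - ‖ss‖^2 := le_trans hQnn hGQ
    nlinarith [mul_nonneg (by linarith : (0:ℝ) ≤ N - 1) (by linarith [hGQ] : (0:ℝ) ≤ (‖sy‖^2 - ‖ss‖^2) - ‖sy - ss‖^2)]
  have hrw2 : -(2 / ((n:ℝ)^2 * r + 1)) = -(2/(N+1)) := by rw [hN_def]
  rw [hrw2]
  nlinarith [hkey]
end
end

section
/- Let g(y) = ‖Σ_{i=1}^r y^(i)‖² on ℝ^{nr} and let x, h ∈ ℝ^{nr}. For a subset R ⊆ {1,…,r}, let h_R ∈ ℝ^{nr} have blocks (h_R)^(i) = h^(i) for i ∈ R and (h_R)^(i) = 0 otherwise. Then Σ over all R ⊆ {1,…,r} of (1/r)^{|R|} (1 − 1/r)^{r − |R|} · g(x + h_R) ≤ g(x) + (1/r) ⟨∇g(x), h⟩ + (2/r) ‖h‖². (Equivalently: if R is a random subset including each index independently with probability 1/r, then 𝔼[g(x + h_R)] ≤ g(x) + (1/r)⟨∇g(x), h⟩ + (2/r)‖h‖².) -/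
open scoped RealInnerProductSpace Pointwise

noncomputable section

/-- `h_R`: the vector whose block `i` is `h⁽ⁱ⁾` for `i ∈ R` and `0` otherwise. -/
def restrictBlocks (n r : ℕ) (R : Finset (Fin r)) (h : Vec n r) : Vec n r :=
  WithLp.toLp 2 (fun i => if i ∈ R then h i else 0)

lemma aux_supset {r : ℕ} (p q : ℝ) (T : Finset (Fin r)) :
    ∑ R : Finset (Fin r), (if T ⊆ R then p ^ R.card * q ^ (r - R.card) else 0)
      = p ^ T.card * (p + q) ^ (r - T.card) := by
  have hcompl : Tᶜ.card = r - T.card := by simp [Finset.card_compl]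
  rw [← Finset.sum_filter]
  rw [Finset.sum_nbij' (i := fun R => R \ T) (j := fun R' => T ∪ R')
      (t := Tᶜ.powerset)
      (g := fun R' => p ^ (T.card + R'.card) * q ^ (Tᶜ.card - R'.card))]
  · calc ∑ R' ∈ Tᶜ.powerset, p ^ (T.card + R'.card) * q ^ (Tᶜ.card - R'.card)
        = p ^ T.card * ∑ R' ∈ Tᶜ.powerset, p ^ R'.card * q ^ (Tᶜ.card - R'.card) := by
          rw [Finset.mul_sum]; exact Finset.sum_congr rfl fun R' _ => by rw [pow_add]; ring
      _ = p ^ T.card * (p + q) ^ (r - T.card) := by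
          rw [Finset.sum_pow_mul_eq_add_pow, hcompl]
  · intro a ha
    simp only [Finset.mem_filter, Finset.mem_univ, true_and] at ha
    simp only [Finset.mem_powerset]
    intro x hx
    simp only [Finset.mem_sdiff] at hx
    simp [hx.2]
  · intro a ha
    simp only [Finset.mem_filter, Finset.mem_univ, true_and]
    exact Finset.subset_union_left
  · intro a ha
    simp only [Finset.mem_filter, Finset.mem_univ, true_and] at ha
    exact Finset.union_sdiff_of_subset ha
  · intro a ha
    simp only [Finset.mem_powerset] at ha
    exact Finset.union_sdiff_cancel_left (Disjoint.mono_right ha disjoint_compl_right)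
  · intro a ha
    simp only [Finset.mem_filter, Finset.mem_univ, true_and] at ha
    have h1 : T.card ≤ a.card := Finset.card_le_card ha
    have h2 : a.card ≤ r := by simpa using Finset.card_le_card (Finset.subset_univ a)
    have e1 : T.card + (a \ T).card = a.card := by rw [Finset.card_sdiff_of_subset ha]; omega
    have e2 : Tᶜ.card - (a \ T).card = r - a.card := by rw [Finset.card_sdiff_of_subset ha, hcompl]; omega
    rw [e1, e2]

/-- The ESO inequality: if `R ⊆ {1,…,r}` is a random subset containing
each index independently with probability `1/r`, then
`𝔼[g(x + h_R)] ≤ g(x) + (1/r)⟨∇g(x), h⟩ + (2/r)‖h‖²`. -/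
theorem statement11 (n r : ℕ) (hn : 1 ≤ n) (hr : 1 ≤ r) (x h : Vec n r) :
    ∑ R : Finset (Fin r),
        ((1 / (r : ℝ)) ^ R.card * (1 - 1 / (r : ℝ)) ^ (r - R.card))
          * g n r (x + restrictBlocks n r R h)
      ≤ g n r x + (1 / (r : ℝ)) * ⟪gradg n r x, h⟫ + (2 / (r : ℝ)) * ‖h‖ ^ 2 := by
  have hr0 : (0 : ℝ) < (r : ℝ) := by exact_mod_cast hr
  set p : ℝ := 1 / (r : ℝ) with hpdef
  have hp0 : 0 < p := by positivity
  set q : ℝ := 1 - p with hqdef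
  have hpq : p + q = 1 := by ring
  set c : Finset (Fin r) → ℝ := fun R => p ^ R.card * q ^ (r - R.card) with hcdef
  set s : EuclideanSpace ℝ (Fin n) := ∑ i, x i with hsdef
  -- the three moment identities
  have momA : ∑ R : Finset (Fin r), c R = 1 := by
    have := aux_supset p q (∅ : Finset (Fin r))
    simpa [hpq] using this
  have momB : ∀ i : Fin r, (∑ R : Finset (Fin r), if i ∈ R then c R else 0) = p := by
    intro i
    have := aux_supset p q ({i} : Finset (Fin r))
    simpa [hpq, Finset.singleton_subset_iff] using this
  have momC : ∀ i j : Fin r, i ≠ j →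
      (∑ R : Finset (Fin r), if i ∈ R ∧ j ∈ R then c R else 0) = p ^ 2 := by
    intro i j hij
    have := aux_supset p q ({i, j} : Finset (Fin r))
    rw [Finset.card_insert_of_notMem (by simpa using hij), Finset.card_singleton, hpq,
      one_pow, mul_one] at this
    rw [← this]
    apply Finset.sum_congr rfl
    intro R _
    congr 1
    simp [Finset.insert_subset_iff, Finset.singleton_subset_iff]
  -- expansion of g at a perturbed point
  have hg : ∀ R : Finset (Fin r), g n r (x + restrictBlocks n r R h)
      = ‖s‖ ^ 2 + 2 * (∑ i, if i ∈ R then ⟪s, h i⟫ else 0)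
        + ∑ i, ∑ j, (if i ∈ R ∧ j ∈ R then ⟪h i, h j⟫ else 0) := by
    intro R
    have hsum : ∑ i, (x + restrictBlocks n r R h) i = s + ∑ i ∈ R, h i := by
      have : ∀ i, (x + restrictBlocks n r R h) i = x i + restrictBlocks n r R h i := fun i => rfl
      rw [Finset.sum_congr rfl fun i _ => this i, Finset.sum_add_distrib]
      congr 1
      rw [show (∑ i, restrictBlocks n r R h i) = ∑ i, if i ∈ R then h i else 0 from rfl,
        Finset.sum_ite_mem, Finset.univ_inter]
    rw [g, hsum, norm_add_sq_real]
    congr 2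
    · congr 1
      rw [inner_sum, Finset.sum_ite_mem, Finset.univ_inter]
    · rw [← real_inner_self_eq_norm_sq, sum_inner]
      calc ∑ i ∈ R, ⟪h i, ∑ j ∈ R, h j⟫
          = ∑ i ∈ R, ∑ j ∈ R, ⟪h i, h j⟫ :=
            Finset.sum_congr rfl fun i _ => inner_sum _ _ _
        _ = ∑ i ∈ R, ∑ j, (if j ∈ R then ⟪h i, h j⟫ else 0) :=
            Finset.sum_congr rfl fun i _ => by rw [Finset.sum_ite_mem, Finset.univ_inter]
        _ = ∑ i, if i ∈ R then ∑ j, (if j ∈ R then ⟪h i, h j⟫ else 0) else 0 := by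
            rw [Finset.sum_ite_mem, Finset.univ_inter]
        _ = ∑ i, ∑ j, (if i ∈ R ∧ j ∈ R then ⟪h i, h j⟫ else 0) :=
            Finset.sum_congr rfl fun i _ => by by_cases hi : i ∈ R <;> simp [hi]
  -- the expectation computation
  have lhs_eq : ∑ R : Finset (Fin r), c R * g n r (x + restrictBlocks n r R h)
      = ‖s‖ ^ 2 + 2 * p * (∑ i, ⟪s, h i⟫)
        + ∑ i, ∑ j, (if i = j then p else p ^ 2) * ⟪h i, h j⟫ := by
    calc ∑ R : Finset (Fin r), c R * g n r (x + restrictBlocks n r R h)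
        = ∑ R : Finset (Fin r), (c R * ‖s‖ ^ 2
            + 2 * ∑ i, (if i ∈ R then c R * ⟪s, h i⟫ else 0)
            + ∑ i, ∑ j, (if i ∈ R ∧ j ∈ R then c R * ⟪h i, h j⟫ else 0)) := by
          refine Finset.sum_congr rfl fun R _ => ?_
          rw [hg R, mul_add, mul_add]
          congr 1
          · congr 1
            rw [mul_left_comm, Finset.mul_sum]
            congr 1
            exact Finset.sum_congr rfl fun i _ => by rw [mul_ite, mul_zero]
          · rw [Finset.mul_sum]
            refine Finset.sum_congr rfl fun i _ => ?_
            rw [Finset.mul_sum]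
            exact Finset.sum_congr rfl fun j _ => by rw [mul_ite, mul_zero]
      _ = (∑ R : Finset (Fin r), c R * ‖s‖ ^ 2)
            + (∑ R : Finset (Fin r), 2 * ∑ i, (if i ∈ R then c R * ⟪s, h i⟫ else 0))
            + ∑ R : Finset (Fin r), ∑ i, ∑ j,
                (if i ∈ R ∧ j ∈ R then c R * ⟪h i, h j⟫ else 0) := by
          rw [Finset.sum_add_distrib, Finset.sum_add_distrib]
      _ = ‖s‖ ^ 2 + 2 * p * (∑ i, ⟪s, h i⟫)
            + ∑ i, ∑ j, (if i = j then p else p ^ 2) * ⟪h i, h j⟫ := by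
          congr 1
          · congr 1
            · rw [← Finset.sum_mul, momA, one_mul]
            · calc ∑ R : Finset (Fin r), 2 * ∑ i, (if i ∈ R then c R * ⟪s, h i⟫ else 0)
                  = 2 * ∑ R : Finset (Fin r), ∑ i, (if i ∈ R then c R * ⟪s, h i⟫ else 0) :=
                    (Finset.mul_sum _ _ _).symm
                _ = 2 * ∑ i, ∑ R : Finset (Fin r), (if i ∈ R then c R * ⟪s, h i⟫ else 0) := by
                    rw [Finset.sum_comm]
                _ = 2 * ∑ i, p * ⟪s, h i⟫ := by
                    congr 1
                    refine Finset.sum_congr rfl fun i _ => ?_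
                    have e : (∑ R : Finset (Fin r), if i ∈ R then c R * ⟪s, h i⟫ else 0)
                        = (∑ R : Finset (Fin r), if i ∈ R then c R else 0) * ⟪s, h i⟫ := by
                      rw [Finset.sum_mul]
                      exact Finset.sum_congr rfl fun R _ => by rw [ite_mul, zero_mul]
                    rw [e, momB i]
                _ = 2 * p * (∑ i, ⟪s, h i⟫) := by rw [← Finset.mul_sum, ← mul_assoc]
          · rw [Finset.sum_comm]
            refine Finset.sum_congr rfl fun i _ => ?_
            rw [Finset.sum_comm]
            refine Finset.sum_congr rfl fun j _ => ?_
            by_cases hij : i = j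
            · subst hij
              have e : (∑ R : Finset (Fin r), if i ∈ R ∧ i ∈ R then c R * ⟪h i, h i⟫ else 0)
                  = (∑ R : Finset (Fin r), if i ∈ R then c R else 0) * ⟪h i, h i⟫ := by
                rw [Finset.sum_mul]
                refine Finset.sum_congr rfl fun R _ => ?_
                by_cases hiR : i ∈ R <;> simp [hiR]
              rw [e, momB i, if_pos rfl]
            · have e : (∑ R : Finset (Fin r), if i ∈ R ∧ j ∈ R then c R * ⟪h i, h j⟫ else 0)
                  = (∑ R : Finset (Fin r), if i ∈ R ∧ j ∈ R then c R else 0) * ⟪h i, h j⟫ := by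
                rw [Finset.sum_mul]
                exact Finset.sum_congr rfl fun R _ => by rw [ite_mul, zero_mul]
              rw [e, momC i j hij, if_neg hij]
  -- right-hand side pieces
  have hgrad : ⟪gradg n r x, h⟫ = 2 * ∑ i, ⟪s, h i⟫ := by
    rw [show ⟪gradg n r x, h⟫ = ∑ i, ⟪gradg n r x i, h i⟫ from PiLp.inner_apply _ _,
      Finset.mul_sum]
    exact Finset.sum_congr rfl fun i _ => by
      rw [show gradg n r x i = (2:ℝ) • s from rfl, real_inner_smul_left]
  have hnormh : ‖h‖ ^ 2 = ∑ i, ‖h i‖ ^ 2 := PiLp.norm_sq_eq_of_L2 _ h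
  have hgx : g n r x = ‖s‖ ^ 2 := rfl
  -- Cauchy–Schwarz estimate
  have key : ∑ i, ∑ j, (if i = j then p else p ^ 2) * ⟪h i, h j⟫
      ≤ 2 * p * ∑ i, ‖h i‖ ^ 2 := by
    have split : ∑ i, ∑ j, (if i = j then p else p ^ 2) * ⟪h i, h j⟫
        = p ^ 2 * (∑ i, ∑ j, ⟪h i, h j⟫) + (p - p ^ 2) * ∑ i, ‖h i‖ ^ 2 := by
      rw [Finset.mul_sum, Finset.mul_sum, ← Finset.sum_add_distrib]
      refine Finset.sum_congr rfl fun i _ => ?_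
      rw [Finset.mul_sum]
      have e : (p - p ^ 2) * ‖h i‖ ^ 2
          = ∑ j, if i = j then (p - p ^ 2) * ⟪h i, h j⟫ else 0 := by
        rw [Finset.sum_ite_eq]
        simp only [Finset.mem_univ, if_true, real_inner_self_eq_norm_sq]
      rw [e, ← Finset.sum_add_distrib]
      refine Finset.sum_congr rfl fun j _ => ?_
      by_cases hij : i = j
      · subst hij; simp only [eq_self_iff_true, if_true]; ring
      · simp only [if_neg hij, add_zero]
    rw [split]
    have hsumM : ∑ i, ∑ j, ⟪h i, h j⟫ = ‖∑ i, h i‖ ^ 2 := by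
      rw [← real_inner_self_eq_norm_sq, sum_inner]
      exact Finset.sum_congr rfl fun i _ => (inner_sum _ _ _).symm
    have hCS : ‖∑ i, h i‖ ^ 2 ≤ (r : ℝ) * ∑ i, ‖h i‖ ^ 2 := by
      have h1 : ‖∑ i, h i‖ ≤ ∑ i, ‖h i‖ := norm_sum_le _ _
      have h2 : (∑ i, ‖h i‖) ^ 2 ≤ (r : ℝ) * ∑ i, ‖h i‖ ^ 2 := by
        have := sq_sum_le_card_mul_sum_sq (s := (Finset.univ : Finset (Fin r)))
          (f := fun i => ‖h i‖)
        simpa using this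
      calc ‖∑ i, h i‖ ^ 2 ≤ (∑ i, ‖h i‖) ^ 2 := by
            exact pow_le_pow_left₀ (norm_nonneg _) h1 2
        _ ≤ (r : ℝ) * ∑ i, ‖h i‖ ^ 2 := h2
    rw [hsumM]
    have hpr : p ^ 2 * (r : ℝ) = p := by
      rw [hpdef]; field_simp
    have hH : (0 : ℝ) ≤ ∑ i, ‖h i‖ ^ 2 :=
      Finset.sum_nonneg fun i _ => sq_nonneg _
    nlinarith [sq_nonneg p, mul_le_mul_of_nonneg_left hCS (sq_nonneg p)]
  -- put everything together
  calc ∑ R : Finset (Fin r), c R * g n r (x + restrictBlocks n r R h)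
      = ‖s‖ ^ 2 + 2 * p * (∑ i, ⟪s, h i⟫)
        + ∑ i, ∑ j, (if i = j then p else p ^ 2) * ⟪h i, h j⟫ := lhs_eq
    _ ≤ ‖s‖ ^ 2 + 2 * p * (∑ i, ⟪s, h i⟫) + 2 * p * ∑ i, ‖h i‖ ^ 2 := by linarith
    _ = g n r x + p * ⟪gradg n r x, h⟫ + (2 / (r : ℝ)) * ‖h‖ ^ 2 := by
        rw [hgx, hgrad, hnormh]
        rw [show (2 : ℝ) / (r : ℝ) = 2 * p from by rw [hpdef]; ring]
        ring
end
end
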